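/- arXiv:2102.08525 — 11 statements merged into one kernel-verified Lean document; each statement's English description precedes it below -/
import Mathlib

section
/- Excision property: Let Γ ⊆ ℙⁿ be a finite set satisfying CB(r), and let 𝒫 = P₁ ∪ … ∪ P_ℓ be a plane configuration of length ℓ with ℓ ≤ r. Then the set Γ \ 𝒫 satisfies CB(r − ℓ). In particular, the complement of Γ by a single positive-dimensional projective linear subspace satisfies CB(r − 1). -/
open MvPolynomial

/-- A point of `ℙⁿ` over `k`, realized as the projectivization of `k^(n+1)`. -/
abbrev ProjSpace (k : Type*) [Field k] (n : ℕ) : Type _ :=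
  Projectivization k (Fin (n + 1) → k)

/-- The projective linear subspace of `ℙⁿ` determined by a linear subspace
`W ⊆ k^(n+1)`, as a set of points. -/
def projSet {k : Type*} [Field k] {n : ℕ} (W : Submodule k (Fin (n + 1) → k)) :
    Set (ProjSpace k n) :=
  {x | x.rep ∈ W}

/-- The Cayley–Bacharach condition `CB(r)`: every homogeneous polynomial of degree `r`
vanishing at all points of `Γ` except possibly one vanishes on all of `Γ`. -/
def IsCB {k : Type*} [Field k] {n : ℕ} (r : ℕ) (Γ : Set (ProjSpace k n)) : Prop :=
  ∀ F : MvPolynomial (Fin (n + 1)) k, F.IsHomogeneous r →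
    ∀ x ∈ Γ, (∀ y ∈ Γ, y ≠ x → MvPolynomial.eval y.rep F = 0) →
      MvPolynomial.eval x.rep F = 0

/-- A plane configuration in `ℙⁿ`: a finite collection of distinct
positive-dimensional projective linear subspaces. -/
structure PlaneConfig (k : Type*) [Field k] (n : ℕ) where
  length : ℕ
  P : Fin length → Submodule k (Fin (n + 1) → k)
  inj : Function.Injective P
  posdim : ∀ i, 2 ≤ Module.finrank k (P i)

namespace PlaneConfig

variable {k : Type*} [Field k] {n : ℕ}

/-- The dimension of a plane configuration: the sum of the (projective) dimensions
of its planes. -/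
noncomputable def dim (C : PlaneConfig k n) : ℕ := ∑ i, (Module.finrank k (C.P i) - 1)

/-- The set of points of `ℙⁿ` lying on the configuration. -/
def points (C : PlaneConfig k n) : Set (ProjSpace k n) := ⋃ i, projSet (C.P i)

/-- A configuration is skew if its planes are pairwise (projectively) disjoint. -/
def Skew (C : PlaneConfig k n) : Prop := ∀ i j, i ≠ j → C.P i ⊓ C.P j = ⊥

end PlaneConfig


private lemma eval_linForm {k : Type*} [Field k] {n : ℕ} (f : Module.Dual k (Fin (n+1) → k))
    (v : Fin (n+1) → k) :
    MvPolynomial.eval v (∑ j, MvPolynomial.C (f (Pi.single j 1)) * MvPolynomial.X j) = f v := by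
  rw [LinearMap.pi_apply_eq_sum_univ f v]
  simp only [map_sum, map_mul, eval_C, eval_X, smul_eq_mul]
  refine Finset.sum_congr rfl fun i _ => ?_
  rw [mul_comm]
  have : (fun j => if i = j then (1:k) else 0) = Pi.single i 1 := by
    ext j; simp [Pi.single_apply, eq_comm]
  rw [this]

private lemma linForm_homog {k : Type*} [Field k] {n : ℕ} (f : Module.Dual k (Fin (n+1) → k)) :
    MvPolynomial.IsHomogeneous (∑ j, MvPolynomial.C (f (Pi.single j 1)) * MvPolynomial.X j) 1 := by
  apply MvPolynomial.IsHomogeneous.sum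
  intro i _
  exact (MvPolynomial.isHomogeneous_C _ _).mul (MvPolynomial.isHomogeneous_X _ _)

/-- Excision property: if `Γ` satisfies `CB(r)` and `C` is a plane configuration of
length `ℓ ≤ r`, then `Γ \ C` satisfies `CB(r - ℓ)`. -/
theorem excision {k : Type*} [Field k] [Infinite k] {n : ℕ} (r : ℕ)
    (Γ : Set (ProjSpace k n)) (hfin : Γ.Finite) (hCB : IsCB r Γ)
    (C : PlaneConfig k n) (hlen : C.length ≤ r) :
    IsCB (r - C.length) (Γ \ C.points) := by
  intro F hF x hx hvan
  obtain ⟨hxΓ, hxP⟩ := hx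
  -- choose a linear functional for each plane, killing the plane but not x
  have hsep : ∀ i, ∃ f : Module.Dual k (Fin (n+1) → k),
      f ∈ (C.P i).dualAnnihilator ∧ f x.rep ≠ 0 := by
    intro i
    have hxi : x.rep ∉ C.P i := by
      intro h
      exact hxP (Set.mem_iUnion.mpr ⟨i, h⟩)
    by_contra hcon
    push_neg at hcon
    exact hxi ((Subspace.forall_mem_dualAnnihilator_apply_eq_zero_iff (C.P i) x.rep).mp
      (fun φ hφ => hcon φ hφ))
  choose f hfann hfx using hsep
  set L : Fin C.length → MvPolynomial (Fin (n+1)) k :=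
    fun i => ∑ j, MvPolynomial.C (f i (Pi.single j 1)) * MvPolynomial.X j with hL
  set G : MvPolynomial (Fin (n+1)) k := F * ∏ i, L i with hG
  have hGhom : G.IsHomogeneous r := by
    have hprod : MvPolynomial.IsHomogeneous (∏ i, L i) C.length := by
      have := MvPolynomial.IsHomogeneous.prod Finset.univ L (fun _ => 1)
        (fun i _ => linForm_homog (f i))
      simpa using this
    have := hF.mul hprod
    rwa [Nat.sub_add_cancel hlen] at this
  have hGvan : ∀ y ∈ Γ, y ≠ x → MvPolynomial.eval y.rep G = 0 := by
    intro y hy hyx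
    rw [hG, map_mul]
    by_cases hyP : y ∈ C.points
    · obtain ⟨i, hi⟩ := Set.mem_iUnion.mp hyP
      have : MvPolynomial.eval y.rep (L i) = 0 := by
        rw [hL]
        rw [eval_linForm (f i) y.rep]
        exact (Submodule.mem_dualAnnihilator _).mp (hfann i) y.rep hi
      rw [map_prod, Finset.prod_eq_zero (Finset.mem_univ i) this, mul_zero]
    · rw [hvan y ⟨hy, hyP⟩ hyx, zero_mul]
  have hGx : MvPolynomial.eval x.rep G = 0 := hCB G hGhom x hxΓ hGvan
  rw [hG, map_mul, map_prod] at hGx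
  rcases mul_eq_zero.mp hGx with h | h
  · exact h
  · exfalso
    obtain ⟨i, _, hi⟩ := Finset.prod_eq_zero_iff.mp h
    rw [hL, eval_linForm (f i) x.rep] at hi
    exact hfx i hi
end

section
/- Let P₁ and P₂ be disjoint positive-dimensional projective linear subspaces of ℙⁿ, and let Γ ⊆ P₁ ∪ P₂ be a finite set. Let r ≥ 1. Then Γ satisfies CB(r) if and only if both Γ ∩ P₁ and Γ ∩ P₂ satisfy CB(r). -/
open MvPolynomial

lemma exists_projection {k : Type*} [Field k] {V : Type*} [AddCommGroup V] [Module k V]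
    (P₁ P₂ : Submodule k V) (h : P₁ ⊓ P₂ = ⊥) :
    ∃ π : V →ₗ[k] V, (∀ v ∈ P₁, π v = v) ∧ (∀ v ∈ P₂, π v = 0) := by
  set f : P₁ →ₗ[k] V ⧸ P₂ := P₂.mkQ.comp P₁.subtype with hf
  have hinj : Function.Injective f := by
    rw [← LinearMap.ker_eq_bot]
    ext ⟨v, hv⟩
    simp only [LinearMap.mem_ker, hf, LinearMap.comp_apply, Submodule.subtype_apply,
      Submodule.mkQ_apply, Submodule.Quotient.mk_eq_zero, Submodule.mem_bot,
      Submodule.mk_eq_zero]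
    constructor
    · intro hv2
      have : v ∈ P₁ ⊓ P₂ := ⟨hv, hv2⟩
      rw [h] at this
      simpa using this
    · rintro rfl; exact P₂.zero_mem
  set e := LinearEquiv.ofInjective f hinj
  obtain ⟨Q, hQ⟩ := Submodule.exists_isCompl (LinearMap.range f)
  set pr := Submodule.projectionOnto _ Q hQ
  refine ⟨P₁.subtype ∘ₗ (e.symm : _ →ₗ[k] P₁) ∘ₗ (pr ∘ₗ P₂.mkQ), ?_, ?_⟩
  · intro v hv
    have h1 : P₂.mkQ v = ↑(e ⟨v, hv⟩) := by
      simp [e, LinearEquiv.ofInjective_apply, hf]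
    simp only [LinearMap.comp_apply, h1]
    rw [Submodule.projectionOnto_apply_left hQ]
    simp
  · intro v hv
    have h1 : P₂.mkQ v = 0 := by simpa [Submodule.Quotient.mk_eq_zero] using hv
    simp [h1]


lemma exists_comp {k : Type*} [Field k] {m : ℕ} (π : (Fin m → k) →ₗ[k] (Fin m → k))
    (r : ℕ) (F : MvPolynomial (Fin m) k) (hF : F.IsHomogeneous r) :
    ∃ G : MvPolynomial (Fin m) k, G.IsHomogeneous r ∧ ∀ v, eval v G = eval (π v) F := by
  refine ⟨eval₂ C (fun i => ∑ j, C (π (fun t => if j = t then 1 else 0) i) * X j) F, ?_, ?_⟩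
  · have := hF.eval₂ C (fun i => ∑ j, C (π (fun t => if j = t then 1 else 0) i) * X j)
      (fun s => isHomogeneous_C _ _)
      (fun i => MvPolynomial.IsHomogeneous.sum _ _ 1 fun j _ => isHomogeneous_C_mul_X _ _)
    simpa using this
  · intro v
    rw [eval_eval₂]
    have hid : (eval v).comp (C : k →+* MvPolynomial (Fin m) k) = RingHom.id k := by
      ext a; simp
    rw [hid, eval₂_id]
    have harg : (fun s => (eval v) (∑ j, C (π (fun t => if j = t then 1 else 0) s) * X j))
        = π v := by
      funext i
      rw [LinearMap.pi_apply_eq_sum_univ π v]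
      simp [Finset.sum_apply, mul_comm]
    rw [harg]

/-- For `Γ` contained in a union of two disjoint positive-dimensional linear subspaces,
`Γ` is `CB(r)` iff both parts are `CB(r)` (for `r ≥ 1`). -/
theorem disjoint_planes {k : Type*} [Field k] [Infinite k] {n : ℕ} (r : ℕ) (hr : 1 ≤ r)
    (P₁ P₂ : Submodule k (Fin (n + 1) → k))
    (h1 : 2 ≤ Module.finrank k P₁) (h2 : 2 ≤ Module.finrank k P₂)
    (hdisj : P₁ ⊓ P₂ = ⊥)
    (Γ : Set (ProjSpace k n)) (hfin : Γ.Finite)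
    (hsub : Γ ⊆ projSet P₁ ∪ projSet P₂) :
    IsCB r Γ ↔ (IsCB r (Γ ∩ projSet P₁) ∧ IsCB r (Γ ∩ projSet P₂)) := by
  
  have key : ∀ (Q₁ Q₂ : Submodule k (Fin (n + 1) → k)), Q₁ ⊓ Q₂ = ⊥ →
      Γ ⊆ projSet Q₁ ∪ projSet Q₂ → IsCB r Γ → IsCB r (Γ ∩ projSet Q₁) := by
    intro Q₁ Q₂ hd hs hCB F hFh x hx hvan
    obtain ⟨π, hπ1, hπ2⟩ := exists_projection Q₁ Q₂ hd
    obtain ⟨G, hGh, hGe⟩ := exists_comp π r F hFh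
    have hGx : eval x.rep G = eval x.rep F := by rw [hGe, hπ1 _ hx.2]
    rw [← hGx]
    apply hCB G hGh x hx.1
    intro y hy hne
    rw [hGe]
    rcases hs hy with hy1 | hy2
    · rw [hπ1 _ hy1]
      exact hvan y ⟨hy, hy1⟩ hne
    · rw [hπ2 _ hy2]
      have h0 : eval (0 : Fin (n + 1) → k) F = constantCoeff F := by rw [eval_zero]
      rw [h0, constantCoeff_eq]
      apply hFh.coeff_eq_zero
      simp only [map_zero]
      omega
  constructor
  · intro hCB
    refine ⟨key P₁ P₂ hdisj hsub hCB, key P₂ P₁ (by rwa [inf_comm]) ?_ hCB⟩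
    intro y hy
    exact (hsub hy).elim Or.inr Or.inl
  · rintro ⟨hCB1, hCB2⟩ F hFh x hx hvan
    rcases hsub hx with hx1 | hx2
    · exact hCB1 F hFh x ⟨hx, hx1⟩ fun y hy hne => hvan y hy.1 hne
    · exact hCB2 F hFh x ⟨hx, hx2⟩ fun y hy hne => hvan y hy.1 hne
end

section
/- Let 𝒫 = P₁ ∪ … ∪ P_k be a split plane configuration in ℙⁿ and let Γ ⊆ 𝒫 be a finite set. Let r ≥ 1. Then Γ satisfies CB(r) if and only if, for each i, the set Γ ∩ Pᵢ satisfies CB(r). -/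
open MvPolynomial

section SplitAux

variable {k : Type*} [Field k] {n : ℕ}

/-- Evaluation of a polynomial composed with a linear map. -/
lemma eval_linear_subst (π : (Fin (n+1) → k) →ₗ[k] (Fin (n+1) → k))
    (F : MvPolynomial (Fin (n+1)) k) (v : Fin (n+1) → k) :
    eval v (bind₁ (fun j => ∑ l, C (π (Pi.single l 1) j) * X l) F) = eval (π v) F := by
  have hπ : π v = fun j => ∑ l, π (Pi.single l 1) j * v l := by
    conv_lhs => rw [← Finset.univ_sum_single v]
    rw [map_sum]
    ext j
    rw [Finset.sum_apply]
    refine Finset.sum_congr rfl fun l _ => ?_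
    have h : Pi.single l (v l) = v l • (Pi.single l 1 : Fin (n+1) → k) := by
      rw [← Pi.single_smul, smul_eq_mul, mul_one]
    rw [h, map_smul]
    simp [mul_comm]
  have heq : (eval v : MvPolynomial (Fin (n+1)) k →+* k) = eval₂Hom (RingHom.id k) v := rfl
  rw [heq, eval₂Hom_bind₁, hπ]
  have h2 : (fun i => (eval₂Hom (RingHom.id k) v) (∑ l, C (π (Pi.single l 1) i) * X l))
      = fun j => ∑ l, π (Pi.single l 1) j * v l := by
    funext j
    simp
  rw [h2]
  rfl

lemma homog_linear_subst (π : (Fin (n+1) → k) →ₗ[k] (Fin (n+1) → k))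
    {F : MvPolynomial (Fin (n+1)) k} {r : ℕ} (hF : F.IsHomogeneous r) :
    (bind₁ (fun j => ∑ l, C (π (Pi.single l 1) j) * X l) F).IsHomogeneous r := by
  have := hF.aeval (fun j => ∑ l, C (π (Pi.single l 1) j) * X l)
    (fun j => MvPolynomial.IsHomogeneous.sum _ _ 1 fun l _ => isHomogeneous_C_mul_X _ _)
  simpa using this

end SplitAux

/-- For `Γ` contained in a split plane configuration, `Γ` is `CB(r)` iff each part
`Γ ∩ Pᵢ` is `CB(r)` (for `r ≥ 1`). -/
theorem split_config {k : Type*} [Field k] [Infinite k] {n : ℕ} (r : ℕ) (hr : 1 ≤ r)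
    (C : PlaneConfig k n)
    (hsplit : ∀ i, Disjoint (C.P i) (⨆ j ∈ ({i}ᶜ : Set (Fin C.length)), C.P j))
    (Γ : Set (ProjSpace k n)) (hfin : Γ.Finite) (hsub : Γ ⊆ C.points) :
    IsCB r Γ ↔ ∀ i, IsCB r (Γ ∩ projSet (C.P i)) := by
  constructor
  · intro hCB i F hF x hx hvan
    set S : Submodule k (Fin (n+1) → k) := ⨆ j ∈ ({i}ᶜ : Set (Fin C.length)), C.P j with hS
    obtain ⟨T₀, hT₀⟩ := Submodule.exists_isCompl (C.P i ⊔ S)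
    have hdisj : Disjoint (C.P i) (S ⊔ T₀) := by
      have h1 : (S ⊔ T₀) ⊓ (C.P i ⊔ S) = S := by
        rw [sup_inf_assoc_of_le T₀ le_sup_right]
        rw [inf_comm, hT₀.disjoint.eq_bot, sup_bot_eq]
      rw [disjoint_iff]
      have h2 : C.P i ⊓ (S ⊔ T₀) ≤ S := by
        calc C.P i ⊓ (S ⊔ T₀) ≤ (C.P i ⊔ S) ⊓ (S ⊔ T₀) := inf_le_inf_right _ le_sup_left
        _ = S := by rw [inf_comm]; exact h1
      have h3 : C.P i ⊓ (S ⊔ T₀) ≤ C.P i ⊓ S := le_inf inf_le_left h2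
      rw [(hsplit i).eq_bot] at h3
      exact le_bot_iff.mp h3
    have hcompl : IsCompl (C.P i) (S ⊔ T₀) := by
      constructor
      · exact hdisj
      · rw [codisjoint_iff, ← sup_assoc]
        exact hT₀.codisjoint.eq_top
    set π : (Fin (n+1) → k) →ₗ[k] (Fin (n+1) → k) :=
      (C.P i).subtype.comp ((C.P i).projectionOnto _ hcompl) with hπdef
    have hπ_left : ∀ v, v ∈ C.P i → π v = v := by
      intro v hv
      simp only [hπdef, LinearMap.comp_apply, Submodule.coe_subtype]
      rw [Submodule.projectionOnto_apply_left hcompl ⟨v, hv⟩]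
    have hπ_right : ∀ v, v ∈ S ⊔ T₀ → π v = 0 := by
      intro v hv
      simp only [hπdef, LinearMap.comp_apply, Submodule.coe_subtype]
      rw [Submodule.projectionOnto_apply_of_mem_right hcompl hv]
      simp
    set G := bind₁ (fun j => ∑ l, MvPolynomial.C (π (Pi.single l 1) j) * X l) F with hG
    have hGhom := homog_linear_subst π hF
    have hzero : eval (0 : Fin (n+1) → k) F = 0 := by
      rw [eval_zero, constantCoeff_eq]
      apply hF.coeff_eq_zero
      simp only [map_zero]
      omega
    have hGx := hCB G hGhom x hx.1 ?_
    · rw [hG, eval_linear_subst, hπ_left x.rep hx.2] at hGx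
      exact hGx
    · intro y hy hyx
      rw [hG, eval_linear_subst]
      obtain ⟨j, hj⟩ := Set.mem_iUnion.mp (hsub hy)
      by_cases hymem : y.rep ∈ C.P i
      · rw [hπ_left y.rep hymem]
        exact hvan y ⟨hy, hymem⟩ hyx
      · have hji : j ≠ i := by rintro rfl; exact hymem hj
        have hyS : y.rep ∈ S :=
          (le_iSup₂ (f := fun j (_ : j ∈ ({i}ᶜ : Set (Fin C.length))) => C.P j) j hji) hj
        rw [hπ_right y.rep (le_sup_left (a := S) hyS)]
        exact hzero
  · intro h F hF x hx hvan
    obtain ⟨i, hi⟩ := Set.mem_iUnion.mp (hsub hx)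
    exact h i F hF x ⟨hx, hi⟩ fun y hy hyx => hvan y hy.1 hyx
end

section
/- Disjoint planes case: Fix integers r ≥ 1 and d ≥ 1, and assume the Cayley–Bacharach covering property holds for (r, d') for every 0 ≤ d' ≤ d − 1. Let Γ ⊆ ℙⁿ be a finite set satisfying CB(r) with |Γ| ≤ (d+1)r + 1. Let A, B ⊆ ℙⁿ be disjoint positive-dimensional projective linear subspaces with Γ ⊆ A ∪ B and with Γ ∩ A and Γ ∩ B both nonempty. Then Γ lies on a plane configuration of dimension at most d. -/
open MvPolynomial

/-- The Cayley--Bacharach covering property for parameters `(r, d)`: every finite set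
in any projective space satisfying `CB(r)` with at most `(d+1)r + 1` points lies on a
plane configuration of dimension at most `d`. -/
def CBCoverProp (k : Type*) [Field k] (r d : ℕ) : Prop :=
  ∀ (m : ℕ) (Γ : Set (ProjSpace k m)), Γ.Finite → IsCB r Γ →
    Γ.ncard ≤ (d + 1) * r + 1 →
    ∃ C : PlaneConfig k m, C.dim ≤ d ∧ Γ ⊆ C.points

section Helpers

variable {k : Type*} [Field k] {n : ℕ}

/-- The degree-1 polynomial attached to a dual functional. -/
noncomputable def dualPoly (f : Module.Dual k (Fin (n + 1) → k)) :
    MvPolynomial (Fin (n + 1)) k :=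
  ∑ j, MvPolynomial.C (f (Pi.single j 1)) * MvPolynomial.X j

lemma dualPoly_homog (f : Module.Dual k (Fin (n + 1) → k)) :
    (dualPoly f).IsHomogeneous 1 := by
  apply MvPolynomial.IsHomogeneous.sum
  intro j _
  exact (MvPolynomial.isHomogeneous_X k j).C_mul _

lemma dualPoly_eval (f : Module.Dual k (Fin (n + 1) → k)) (v : Fin (n + 1) → k) :
    MvPolynomial.eval v (dualPoly f) = f v := by
  have hv : f v = ∑ j, v j * f (Pi.single j 1) := by
    conv_lhs => rw [pi_eq_sum_univ v, map_sum]
    refine Finset.sum_congr rfl fun j _ => ?_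
    rw [map_smul, smul_eq_mul]
    congr 2
    ext i
    simp [Pi.single_apply, eq_comm]
  rw [dualPoly, map_sum, hv]
  refine Finset.sum_congr rfl fun j _ => ?_
  simp [mul_comm]

/-- Substituting a linear endomorphism into a polynomial. -/
noncomputable def linSubst (φ : (Fin (n + 1) → k) →ₗ[k] (Fin (n + 1) → k))
    (F : MvPolynomial (Fin (n + 1)) k) : MvPolynomial (Fin (n + 1)) k :=
  aeval (fun i => dualPoly ((LinearMap.proj i).comp φ)) F

lemma linSubst_homog {φ : (Fin (n + 1) → k) →ₗ[k] (Fin (n + 1) → k)}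
    {F : MvPolynomial (Fin (n + 1)) k} {r : ℕ} (hF : F.IsHomogeneous r) :
    (linSubst φ F).IsHomogeneous r := by
  simpa [one_mul, linSubst] using hF.aeval (fun i => dualPoly ((LinearMap.proj i).comp φ))
    (fun i => dualPoly_homog _)

lemma linSubst_eval (φ : (Fin (n + 1) → k) →ₗ[k] (Fin (n + 1) → k))
    (F : MvPolynomial (Fin (n + 1)) k) (v : Fin (n + 1) → k) :
    MvPolynomial.eval v (linSubst φ F) = MvPolynomial.eval (φ v) F := by
  rw [linSubst, aeval_def, eval_eval₂]
  have h1 : ((MvPolynomial.eval v).comp (algebraMap k (MvPolynomial (Fin (n + 1)) k)))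
      = RingHom.id k := by
    ext c
    simp [MvPolynomial.algebraMap_eq]
  rw [h1, eval₂_id]
  have h2 : (fun s => MvPolynomial.eval v (dualPoly ((LinearMap.proj s).comp φ))) = φ v := by
    ext i
    rw [dualPoly_eval]
    rfl
  rw [h2]

lemma exists_proj_of_disjoint {V : Type*} [AddCommGroup V] [Module k V]
    (A B : Submodule k V) (hdisj : A ⊓ B = ⊥) :
    ∃ φ : V →ₗ[k] V, (∀ x ∈ A, φ x = x) ∧ (∀ x ∈ B, φ x = 0) := by
  obtain ⟨q, hq⟩ := Submodule.exists_isCompl (A ⊔ B)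
  have hcompl : IsCompl A (B ⊔ q) := by
    constructor
    · rw [disjoint_iff]
      rw [eq_bot_iff]
      rintro x ⟨hxA, hxBq⟩
      obtain ⟨b, hb, c, hc, rfl⟩ := Submodule.mem_sup.mp hxBq
      have hcAB : c ∈ A ⊔ B := by
        have : c = (b + c) - b := by abel
        rw [this]
        exact Submodule.sub_mem _ (Submodule.mem_sup_left hxA) (Submodule.mem_sup_right hb)
      have hc0 : c = 0 := by
        have := hq.disjoint.le_bot ⟨hcAB, hc⟩
        simpa using this
      subst hc0
      rw [add_zero] at hxA ⊢
      have : b ∈ A ⊓ B := ⟨hxA, hb⟩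
      rw [hdisj] at this
      simpa using this
    · rw [codisjoint_iff, ← sup_assoc]
      exact codisjoint_iff.mp hq.codisjoint
  refine ⟨A.subtype ∘ₗ Submodule.projectionOnto A (B ⊔ q) hcompl, ?_, ?_⟩
  · intro x hx
    have := Submodule.projectionOnto_apply_left hcompl ⟨x, hx⟩
    simp [this]
  · intro x hx
    have := Submodule.projectionOnto_apply_right hcompl ⟨x, Submodule.mem_sup_left hx⟩
    simp [this]

lemma rep_nmem_of_mem_other {A B : Submodule k (Fin (n + 1) → k)} (hdisj : A ⊓ B = ⊥)
    {x : ProjSpace k n} (hx : x.rep ∈ A) : x.rep ∉ B := by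
  intro hB
  have : x.rep ∈ A ⊓ B := ⟨hx, hB⟩
  rw [hdisj] at this
  exact x.rep_nonzero (by simpa using this)

lemma isCB_inter {r : ℕ} (hr : 1 ≤ r) {Γ : Set (ProjSpace k n)} (hCB : IsCB r Γ)
    {A B : Submodule k (Fin (n + 1) → k)} (hdisj : A ⊓ B = ⊥)
    (hsub : Γ ⊆ projSet A ∪ projSet B) : IsCB r (Γ ∩ projSet A) := by
  intro F hF x hx hvan
  obtain ⟨φ, hφA, hφB⟩ := exists_proj_of_disjoint A B hdisj
  have hGx : MvPolynomial.eval x.rep (linSubst φ F) = MvPolynomial.eval x.rep F := by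
    rw [linSubst_eval, hφA _ hx.2]
  rw [← hGx]
  refine hCB (linSubst φ F) (linSubst_homog hF) x hx.1 ?_
  intro y hy hyx
  rw [linSubst_eval]
  rcases hsub hy with hyA | hyB
  · rw [hφA _ hyA]
    exact hvan y ⟨hy, hyA⟩ hyx
  · rw [hφB _ hyB]
    have h0 : ((0 : (Fin (n + 1)) →₀ ℕ)).degree ≠ r := by
      simp only [map_zero]
      omega
    have := hF.coeff_eq_zero h0
    rw [MvPolynomial.eval_zero]
    simpa [MvPolynomial.constantCoeff_eq] using this

lemma exists_dual_sep {W : Submodule k (Fin (n + 1) → k)} {v : Fin (n + 1) → k} (hv : v ∉ W) :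
    ∃ f : Module.Dual k (Fin (n + 1) → k), f v ≠ 0 ∧ ∀ w ∈ W, f w = 0 := by
  obtain ⟨f, hf, hf'⟩ := W.exists_dual_map_eq_bot_of_notMem hv inferInstance
  refine ⟨f, hf, fun w hw => ?_⟩
  have : f w ∈ W.map f := ⟨w, hw, rfl⟩
  rw [hf'] at this
  simpa using this

lemma rep_nmem_span_of_ne {x y : ProjSpace k n} (hxy : x ≠ y) :
    x.rep ∉ Submodule.span k {y.rep} := by
  intro h
  obtain ⟨c, hc⟩ := Submodule.mem_span_singleton.mp h
  apply hxy
  rw [← Projectivization.mk_rep x, ← Projectivization.mk_rep y]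
  rw [Projectivization.mk_eq_mk_iff']
  exact ⟨c, hc⟩

lemma card_lower {r : ℕ} (hr : 1 ≤ r) {Γ : Set (ProjSpace k n)} (hfin : Γ.Finite)
    (hCB : IsCB r Γ) {A B : Submodule k (Fin (n + 1) → k)} (hdisj : A ⊓ B = ⊥)
    (hsub : Γ ⊆ projSet A ∪ projSet B) (hAne : (Γ ∩ projSet A).Nonempty)
    (hBne : (Γ ∩ projSet B).Nonempty) : r + 1 ≤ (Γ ∩ projSet A).ncard := by
  by_contra hlt
  push_neg at hlt
  obtain ⟨x, hxΓ, hxA⟩ := hAne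
  have hfinA : ((Γ ∩ projSet A) \ {x}).Finite := ((hfin.inter_of_left _).diff)
  classical
  set T := hfinA.toFinset with hT
  have hmemT : ∀ y, y ∈ T ↔ (y ∈ Γ ∧ y ∈ projSet A) ∧ y ≠ x := by
    intro y
    rw [hT, Set.Finite.mem_toFinset]
    simp [Set.mem_diff, Set.mem_inter_iff]
  have hTcard : T.card ≤ r - 1 := by
    have h1 : ((Γ ∩ projSet A) \ {x}).ncard = (Γ ∩ projSet A).ncard - 1 :=
      Set.ncard_diff_singleton_of_mem ⟨hxΓ, hxA⟩
    have h2 : ((Γ ∩ projSet A) \ {x}).ncard = T.card :=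
      Set.ncard_eq_toFinset_card _ hfinA
    omega
  -- functionals separating x from the other points of Γ ∩ A
  have hsep : ∀ y : ProjSpace k n, ∃ f : Module.Dual k (Fin (n + 1) → k),
      y ≠ x → (f y.rep = 0 ∧ f x.rep ≠ 0) := by
    intro y
    by_cases h : y = x
    · exact ⟨0, fun h' => absurd h h'⟩
    · obtain ⟨f, hfx, hfW⟩ := exists_dual_sep (rep_nmem_span_of_ne (Ne.symm h))
      exact ⟨f, fun _ => ⟨hfW _ (Submodule.mem_span_singleton_self _), hfx⟩⟩
  choose f hf using hsep
  -- functional vanishing on B, nonzero at x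
  obtain ⟨g, hgx, hgB⟩ := exists_dual_sep (rep_nmem_of_mem_other hdisj hxA)
  set F := (∏ y ∈ T, dualPoly (f y)) * (dualPoly g) ^ (r - T.card) with hFdef
  have hFhom : F.IsHomogeneous r := by
    have h1 : (∏ y ∈ T, dualPoly (f y)).IsHomogeneous (∑ _y ∈ T, 1) :=
      MvPolynomial.IsHomogeneous.prod T _ _ (fun y _ => dualPoly_homog (f y))
    have h2 : ((dualPoly g) ^ (r - T.card)).IsHomogeneous (1 * (r - T.card)) :=
      (dualPoly_homog g).pow _
    have h3 := h1.mul h2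
    have h4 : (∑ _y ∈ T, 1) + 1 * (r - T.card) = r := by
      rw [Finset.sum_const, smul_eq_mul, mul_one, one_mul]
      omega
    rwa [h4] at h3
  have hvan : ∀ y ∈ Γ, y ≠ x → MvPolynomial.eval y.rep F = 0 := by
    intro z hz hzx
    rw [hFdef, map_mul, map_prod, map_pow]
    rcases hsub hz with hzA | hzB
    · have hzT : z ∈ T := (hmemT z).mpr ⟨⟨hz, hzA⟩, hzx⟩
      rw [Finset.prod_eq_zero hzT (by rw [dualPoly_eval]; exact (hf z hzx).1)]
      rw [zero_mul]
    · rw [dualPoly_eval, hgB _ hzB, zero_pow (by omega), mul_zero]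
  have h0 := hCB F hFhom x hxΓ hvan
  rw [hFdef, map_mul, map_prod, map_pow, dualPoly_eval] at h0
  rcases mul_eq_zero.mp h0 with h1 | h2
  · obtain ⟨y, hyT, hy0⟩ := Finset.prod_eq_zero_iff.mp h1
    rw [dualPoly_eval] at hy0
    exact (hf y ((hmemT y).mp hyT).2).2 hy0
  · exact hgx (pow_eq_zero_iff (by omega) |>.mp h2)

lemma config_of_finset (S : Finset (Submodule k (Fin (n + 1) → k)))
    (hpos : ∀ W ∈ S, 2 ≤ Module.finrank k W) :
    ∃ C : PlaneConfig k n, C.dim = ∑ W ∈ S, (Module.finrank k (W : Submodule k (Fin (n+1) → k)) - 1) ∧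
      C.points = ⋃ W ∈ S, projSet W := by
  classical
  refine ⟨⟨S.card, fun i => (S.equivFin.symm i : Submodule k (Fin (n+1) → k)), ?_, ?_⟩, ?_, ?_⟩
  · intro i j hij
    exact S.equivFin.symm.injective (Subtype.val_injective hij)
  · intro i
    exact hpos _ (S.equivFin.symm i).2
  · show (∑ i, (Module.finrank k ((S.equivFin.symm i : Submodule k (Fin (n+1) → k))) - 1)) = _
    rw [← Finset.sum_coe_sort S (fun W => Module.finrank k (W : Submodule k (Fin (n+1) → k)) - 1)]
    exact (Fintype.sum_equiv S.equivFin _ _ (fun x => by rw [Equiv.symm_apply_apply])).symm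
  · show (⋃ i, projSet (((S.equivFin.symm i) : Submodule k (Fin (n+1) → k)))) = _
    ext x
    simp only [Set.mem_iUnion, exists_prop]
    constructor
    · rintro ⟨i, hi⟩
      exact ⟨_, (S.equivFin.symm i).2, hi⟩
    · rintro ⟨W, hW, hx⟩
      exact ⟨S.equivFin ⟨W, hW⟩, by rwa [Equiv.symm_apply_apply]⟩

lemma config_union (C D : PlaneConfig k n) :
    ∃ E : PlaneConfig k n, E.dim ≤ C.dim + D.dim ∧ C.points ∪ D.points ⊆ E.points := by
  classical
  set S := (Finset.univ.image C.P) ∪ (Finset.univ.image D.P) with hS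
  obtain ⟨E, hdim, hpts⟩ := config_of_finset S (by
    intro W hW
    rw [hS, Finset.mem_union] at hW
    rcases hW with h | h <;> obtain ⟨i, _, rfl⟩ := Finset.mem_image.mp h
    · exact C.posdim i
    · exact D.posdim i)
  refine ⟨E, ?_, ?_⟩
  · rw [hdim]
    have hsplit : ∑ W ∈ S, (Module.finrank k (W : Submodule k (Fin (n+1) → k)) - 1) ≤
        (∑ W ∈ Finset.univ.image C.P, (Module.finrank k (W : Submodule k (Fin (n+1) → k)) - 1)) +
        (∑ W ∈ Finset.univ.image D.P, (Module.finrank k (W : Submodule k (Fin (n+1) → k)) - 1)) := by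
      rw [hS, ← Finset.union_sdiff_self_eq_union, Finset.sum_union Finset.disjoint_sdiff]
      exact add_le_add_right (Finset.sum_le_sum_of_subset (Finset.sdiff_subset)) _
    have hC : ∑ W ∈ Finset.univ.image C.P,
        (Module.finrank k (W : Submodule k (Fin (n+1) → k)) - 1) = C.dim := by
      rw [Finset.sum_image (fun i _ j _ h => C.inj h)]; rfl
    have hD : ∑ W ∈ Finset.univ.image D.P,
        (Module.finrank k (W : Submodule k (Fin (n+1) → k)) - 1) = D.dim := by
      rw [Finset.sum_image (fun i _ j _ h => D.inj h)]; rfl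
    omega
  · rw [hpts]
    rintro x (hx | hx) <;> rw [PlaneConfig.points, Set.mem_iUnion] at hx <;>
      obtain ⟨i, hi⟩ := hx
    · exact Set.mem_biUnion (Finset.mem_union_left _ (Finset.mem_image_of_mem _ (Finset.mem_univ i))) hi
    · exact Set.mem_biUnion (Finset.mem_union_right _ (Finset.mem_image_of_mem _ (Finset.mem_univ i))) hi

lemma arith_cover {r d a b : ℕ} (hr : 1 ≤ r) (ha : r + 1 ≤ a) (hb : r + 1 ≤ b)
    (hab : a + b ≤ (d + 1) * r + 1) :
    a ≤ ((a - 2) / r + 1) * r + 1 ∧ (a - 2) / r < d ∧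
      (a - 2) / r + (b - 2) / r ≤ d := by
  have hr0 : 0 < r := hr
  refine ⟨?_, ?_, ?_⟩
  · have h1 : a - 2 < (a - 2) / r * r + r := Nat.lt_div_mul_add hr0
    have h2 : ((a - 2) / r + 1) * r = (a - 2) / r * r + r := by ring
    rw [h2]
    generalize (a - 2) / r * r = E at h1 ⊢
    omega
  · rw [Nat.div_lt_iff_lt_mul hr0]
    have h2 : (d + 1) * r = d * r + r := by ring
    rw [h2] at hab
    generalize d * r = Y at hab ⊢
    omega
  · have h1 : ((a - 2) / r + (b - 2) / r) * r ≤ (a - 2) + (b - 2) := by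
      rw [add_mul]
      exact add_le_add (Nat.div_mul_le_self _ _) (Nat.div_mul_le_self _ _)
    have h2 : (a - 2) + (b - 2) < (d + 1) * r := by
      generalize (d + 1) * r = X at hab ⊢
      omega
    have h4 := lt_of_mul_lt_mul_right (lt_of_le_of_lt h1 h2) (Nat.zero_le r)
    exact Nat.lt_succ_iff.mp h4

end Helpers

/-- Disjoint planes case: assuming the covering property below dimension `d`, a `CB(r)` set
of at most `(d+1)r + 1` points lying on two disjoint positive-dimensional planes, meeting
both, lies on a plane configuration of dimension at most `d`. -/
theorem disjoint_planes_case {k : Type*} [Field k] [Infinite k] {n : ℕ} (r d : ℕ)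
    (hr : 1 ≤ r) (hd : 1 ≤ d) (hcover : ∀ d' < d, CBCoverProp k r d')
    (Γ : Set (ProjSpace k n)) (hfin : Γ.Finite) (hCB : IsCB r Γ)
    (hcard : Γ.ncard ≤ (d + 1) * r + 1)
    (A B : Submodule k (Fin (n + 1) → k))
    (hA : 2 ≤ Module.finrank k A) (hB : 2 ≤ Module.finrank k B)
    (hdisj : A ⊓ B = ⊥)
    (hsub : Γ ⊆ projSet A ∪ projSet B)
    (hAne : (Γ ∩ projSet A).Nonempty) (hBne : (Γ ∩ projSet B).Nonempty) :
    ∃ C : PlaneConfig k n, C.dim ≤ d ∧ Γ ⊆ C.points := by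
  classical
  have hBA : B ⊓ A = ⊥ := by rwa [inf_comm]
  have hsubBA : Γ ⊆ projSet B ∪ projSet A := by rw [Set.union_comm]; exact hsub
  have hCBA := isCB_inter hr hCB hdisj hsub
  have hCBB := isCB_inter hr hCB hBA hsubBA
  have haLB := card_lower hr hfin hCB hdisj hsub hAne hBne
  have hbLB := card_lower hr hfin hCB hBA hsubBA hBne hAne
  have hcover' : Γ = (Γ ∩ projSet A) ∪ (Γ ∩ projSet B) := by
    ext x
    constructor
    · intro hx
      rcases hsub hx with h | h
      · exact Or.inl ⟨hx, h⟩
      · exact Or.inr ⟨hx, h⟩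
    · rintro (⟨h, -⟩ | ⟨h, -⟩) <;> exact h
  have hdisjΓ : Disjoint (Γ ∩ projSet A) (Γ ∩ projSet B) := by
    rw [Set.disjoint_left]
    rintro x ⟨-, hxA⟩ ⟨-, hxB⟩
    exact rep_nmem_of_mem_other hdisj hxA hxB
  have hsumcard : (Γ ∩ projSet A).ncard + (Γ ∩ projSet B).ncard = Γ.ncard := by
    conv_rhs => rw [hcover']
    exact (Set.ncard_union_eq hdisjΓ (hfin.inter_of_left _) (hfin.inter_of_left _)).symm
  obtain ⟨haU, hdAlt, hsumA⟩ := arith_cover (d := d) hr haLB hbLB (by omega)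
  obtain ⟨hbU, hdBlt, -⟩ := arith_cover (d := d) hr hbLB haLB (by omega)
  obtain ⟨CA, hCAdim, hCAsub⟩ := hcover _ hdAlt n (Γ ∩ projSet A)
    (hfin.inter_of_left _) hCBA haU
  obtain ⟨CB', hCBdim, hCBsub⟩ := hcover _ hdBlt n (Γ ∩ projSet B)
    (hfin.inter_of_left _) hCBB hbU
  obtain ⟨E, hEdim, hEsub⟩ := config_union CA CB'
  refine ⟨E, le_trans hEdim (le_trans (add_le_add hCAdim hCBdim) hsumA), ?_⟩
  intro x hx
  rw [hcover'] at hx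
  rcases hx with hx | hx
  · exact hEsub (Or.inl (hCAsub hx))
  · exact hEsub (Or.inr (hCBsub hx))
end

section
/- Let A and B be positive-dimensional projective linear subspaces of ℙⁿ such that A ∩ B consists of a single point p and A and B together span ℙⁿ. Let Γ ⊆ A ∪ B be a finite set satisfying CB(r), and set Γ_A = (Γ ∩ A) \ {p}. Then at least one of the two sets Γ_A and Γ_A ∪ {p} satisfies CB(r). -/
open MvPolynomial

section Aux

variable {k : Type*} [Field k] {m : ℕ}

private lemma eval_smul_of_isHomogeneous' {r : ℕ}
    {F : MvPolynomial (Fin m) k} (h : F.IsHomogeneous r) (c : k) (v : Fin m → k) :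
    MvPolynomial.eval (c • v) F = c ^ r * MvPolynomial.eval v F := by
  rw [MvPolynomial.eval_eq, MvPolynomial.eval_eq, Finset.mul_sum]
  refine Finset.sum_congr rfl fun d hd => ?_
  have hdeg : ∑ i ∈ d.support, d i = r := by
    have h1 := h (MvPolynomial.mem_support_iff.mp hd)
    rw [Pi.one_def, ← Finsupp.degree_eq_weight_one] at h1
    exact h1
  have : ∀ i ∈ d.support, (c • v) i ^ d i = c ^ d i * v i ^ d i := by
    intro i _
    simp [mul_pow]
  rw [Finset.prod_congr rfl this, Finset.prod_mul_distrib, Finset.prod_pow_eq_pow_sum, hdeg]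
  ring

private noncomputable def substOf (π : (Fin m → k) →ₗ[k] (Fin m → k)) :
    Fin m → MvPolynomial (Fin m) k :=
  fun i => ∑ j, MvPolynomial.C (π (Pi.single j 1) i) * MvPolynomial.X j

private lemma eval_aeval' (v : Fin m → k) (F : MvPolynomial (Fin m) k) :
    MvPolynomial.aeval v F = MvPolynomial.eval v F := by
  rw [MvPolynomial.aeval_def, Algebra.algebraMap_self, MvPolynomial.eval₂_id]

private lemma eval_bind₁_substOf (π : (Fin m → k) →ₗ[k] (Fin m → k))
    (G : MvPolynomial (Fin m) k) (v : Fin m → k) :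
    MvPolynomial.eval v (MvPolynomial.bind₁ (substOf π) G) = MvPolynomial.eval (π v) G := by
  have hv : π v = fun i => MvPolynomial.eval v (substOf π i) := by
    funext i
    have hvsum : v = ∑ j, (v j) • (Pi.single j (1 : k) : Fin m → k) := by
      funext t
      rw [Finset.sum_apply]
      simp [Pi.single_apply]
    conv_lhs => rw [hvsum]
    rw [map_sum]
    simp only [map_smul, Finset.sum_apply, Pi.smul_apply, smul_eq_mul, substOf]
    simp [mul_comm]
  rw [hv, ← eval_aeval', ← eval_aeval' (fun i => MvPolynomial.eval v (substOf π i)) G,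
    MvPolynomial.aeval_bind₁]
  simp only [eval_aeval']

private lemma isHomogeneous_bind₁_substOf (π : (Fin m → k) →ₗ[k] (Fin m → k))
    {G : MvPolynomial (Fin m) k} {r : ℕ} (hG : G.IsHomogeneous r) :
    (MvPolynomial.bind₁ (substOf π) G).IsHomogeneous r := by
  have h : MvPolynomial.bind₁ (substOf π) G = MvPolynomial.aeval (substOf π) G := rfl
  rw [h, ← one_mul r]
  refine hG.aeval _ fun i => ?_
  refine MvPolynomial.IsHomogeneous.sum _ _ _ fun j _ => ?_
  simpa using MvPolynomial.isHomogeneous_C_mul_X_pow (π (Pi.single j 1) i) j 1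

end Aux

/-- Two planes meeting at a point, part 1: at least one of `Γ_A` and `Γ_A ∪ {p}`
satisfies `CB(r)`. -/
theorem union_two_at_point_1 {k : Type*} [Field k] [Infinite k] {n : ℕ} (r : ℕ)
    (A B : Submodule k (Fin (n + 1) → k))
    (hA : 2 ≤ Module.finrank k A) (hB : 2 ≤ Module.finrank k B)
    (p : ProjSpace k n) (hp : projSet A ∩ projSet B = {p})
    (hspan : A ⊔ B = ⊤)
    (Γ : Set (ProjSpace k n)) (hfin : Γ.Finite)
    (hsub : Γ ⊆ projSet A ∪ projSet B) (hCB : IsCB r Γ) :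
    IsCB r ((Γ ∩ projSet A) \ {p}) ∨ IsCB r (((Γ ∩ projSet A) \ {p}) ∪ {p}) := by
  classical
  by_cases hleft : IsCB r ((Γ ∩ projSet A) \ {p})
  · exact Or.inl hleft
  right
  have hpAB : p ∈ projSet A ∩ projSet B := by rw [hp]; rfl
  have hpA : p.rep ∈ A := hpAB.1
  have hpB : p.rep ∈ B := hpAB.2
  -- A ⊓ B ≤ span {p.rep}
  have hABle : A ⊓ B ≤ Submodule.span k {p.rep} := by
    intro w hw
    rcases eq_or_ne w 0 with h0 | h0
    · simp [h0]
    obtain ⟨a, ha⟩ := Projectivization.exists_smul_eq_mk_rep k w h0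
    have hmk : Projectivization.mk k w h0 ∈ projSet A ∩ projSet B := by
      constructor
      · show (Projectivization.mk k w h0).rep ∈ A
        rw [← ha]; exact A.smul_mem _ hw.1
      · show (Projectivization.mk k w h0).rep ∈ B
        rw [← ha]; exact B.smul_mem _ hw.2
    rw [hp] at hmk
    have hmk' : Projectivization.mk k w h0 = p := hmk
    have hrep : (a : k) • w = p.rep := by rw [← hmk', ← ha]; rfl
    refine Submodule.mem_span_singleton.mpr ⟨(a : k)⁻¹, ?_⟩
    rw [← hrep, smul_smul, inv_mul_cancel₀ a.ne_zero, one_smul]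
  -- complement of A ⊓ B inside B
  obtain ⟨q, hq⟩ := Submodule.exists_isCompl ((A ⊓ B).comap B.subtype)
  have hdecomp : ∀ b ∈ B, ∃ y, y ∈ A ⊓ B ∧ ∃ z ∈ q.map B.subtype, b = y + z := by
    intro b hb
    have hmem : (⟨b, hb⟩ : B) ∈ ((A ⊓ B).comap B.subtype) ⊔ q := by
      rw [codisjoint_iff.mp hq.codisjoint]; trivial
    obtain ⟨y, hy, z, hz, hyz⟩ := Submodule.mem_sup.mp hmem
    refine ⟨(y : Fin (n + 1) → k), hy, (z : Fin (n + 1) → k), ⟨z, hz, rfl⟩, ?_⟩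
    have : ((y + z : B) : Fin (n + 1) → k) = b := by rw [hyz]
    simpa using this.symm
  have hcompl : IsCompl A (q.map B.subtype) := by
    constructor
    · rw [disjoint_iff]
      rw [eq_bot_iff]
      rintro x ⟨hxA, hxB'⟩
      obtain ⟨z, hz, rfl⟩ := hxB'
      have hzmem : z ∈ (A ⊓ B).comap B.subtype := by
        simp only [Submodule.mem_comap]
        exact ⟨hxA, z.2⟩
      have hz0 : z ∈ ((A ⊓ B).comap B.subtype) ⊓ q := ⟨hzmem, hz⟩
      rw [disjoint_iff.mp hq.disjoint] at hz0
      rw [Submodule.mem_bot] at hz0 ⊢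
      rw [hz0]; simp
    · rw [codisjoint_iff, ← top_le_iff, ← hspan]
      apply sup_le le_sup_left
      intro b hb
      obtain ⟨y, hy, z, hz, rfl⟩ := hdecomp b hb
      exact Submodule.add_mem _ (Submodule.mem_sup_left hy.1) (Submodule.mem_sup_right hz)
  let π : (Fin (n + 1) → k) →ₗ[k] (Fin (n + 1) → k) :=
    A.subtype ∘ₗ (Submodule.linearProjOfIsCompl A (q.map B.subtype) hcompl)
  have hπA : ∀ x ∈ A, π x = x := by
    intro x hx
    have h1 : Submodule.linearProjOfIsCompl A (q.map B.subtype) hcompl x = ⟨x, hx⟩ :=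
      Submodule.linearProjOfIsCompl_apply_left hcompl ⟨x, hx⟩
    show A.subtype _ = x
    rw [h1]; rfl
  have hπB : ∀ b ∈ B, ∃ c : k, π b = c • p.rep := by
    intro b hb
    obtain ⟨y, hy, z, hz, rfl⟩ := hdecomp b hb
    obtain ⟨c, hc⟩ := Submodule.mem_span_singleton.mp (hABle hy)
    refine ⟨c, ?_⟩
    have hz0 : Submodule.linearProjOfIsCompl A (q.map B.subtype) hcompl z = 0 :=
      Submodule.projectionOnto_apply_of_mem_right hcompl hz
    have hπz : π z = 0 := by
      show A.subtype _ = 0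
      rw [hz0]; rfl
    rw [map_add, hπA y hy.1, hπz, add_zero, hc]
  -- the failed CB witness for Γ_A
  rw [IsCB] at hleft
  push_neg at hleft
  obtain ⟨F₀, hF₀hom, x₀, hx₀, hF₀van, hF₀x₀⟩ := hleft
  intro G hG z hz hGvan
  have htri : ∀ y ∈ Γ, y = p ∨ y ∈ (Γ ∩ projSet A) \ {p} ∨ (y.rep ∈ B ∧ y ≠ p) := by
    intro y hy
    rcases eq_or_ne y p with h | h
    · exact Or.inl h
    rcases hsub hy with hA' | hB'
    · exact Or.inr (Or.inl ⟨⟨hy, hA'⟩, h⟩)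
    · exact Or.inr (Or.inr ⟨hB', h⟩)
  rcases eq_or_ne z p with hzp | hzp
  · -- z = p : prove eval p.rep G = 0 using the witness F₀
    subst hzp
    have hGA : ∀ y ∈ (Γ ∩ projSet A) \ {z}, MvPolynomial.eval y.rep G = 0 := by
      intro y hy
      exact hGvan y (Set.mem_union_left _ hy) (fun h => hy.2 (by rw [h]; rfl))
    set F : MvPolynomial (Fin (n + 1)) k :=
      MvPolynomial.C (MvPolynomial.eval z.rep G) * MvPolynomial.bind₁ (substOf π) F₀
        - MvPolynomial.C (MvPolynomial.eval z.rep F₀) * MvPolynomial.bind₁ (substOf π) G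
      with hFdef
    have hFhom : F.IsHomogeneous r :=
      ((isHomogeneous_bind₁_substOf π hF₀hom).C_mul _).sub
        ((isHomogeneous_bind₁_substOf π hG).C_mul _)
    have hFeval : ∀ v : Fin (n + 1) → k, MvPolynomial.eval v F
        = MvPolynomial.eval z.rep G * MvPolynomial.eval (π v) F₀
          - MvPolynomial.eval z.rep F₀ * MvPolynomial.eval (π v) G := by
      intro v
      simp [hFdef, eval_bind₁_substOf]
    have hFvan : ∀ y ∈ Γ, y ≠ x₀ → MvPolynomial.eval y.rep F = 0 := by
      intro y hy hyx
      rw [hFeval]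
      rcases htri y hy with rfl | hyS | ⟨hyB, hyp⟩
      · rw [hπA _ hpA]; ring
      · rw [hπA _ hyS.1.2, hF₀van y hyS hyx, hGA y hyS]; ring
      · obtain ⟨c, hc⟩ := hπB _ hyB
        rw [hc, eval_smul_of_isHomogeneous' hF₀hom, eval_smul_of_isHomogeneous' hG]
        ring
    have h0 := hCB F hFhom x₀ hx₀.1.1 hFvan
    rw [hFeval, hπA _ hx₀.1.2, hGA x₀ hx₀, mul_zero, sub_zero] at h0
    rcases mul_eq_zero.mp h0 with h | h
    · exact h
    · exact absurd h hF₀x₀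
  · -- z ≠ p : direct transfer
    have hzS : z ∈ (Γ ∩ projSet A) \ {p} := by
      rcases hz with h | h
      · exact h
      · exact absurd h hzp
    have hGp : MvPolynomial.eval p.rep G = 0 :=
      hGvan p (Set.mem_union_right _ rfl) (Ne.symm hzp)
    have hFvan : ∀ y ∈ Γ, y ≠ z →
        MvPolynomial.eval y.rep (MvPolynomial.bind₁ (substOf π) G) = 0 := by
      intro y hy hyz
      rw [eval_bind₁_substOf]
      rcases htri y hy with rfl | hyS | ⟨hyB, hyp⟩
      · rw [hπA _ hpA]; exact hGp
      · rw [hπA _ hyS.1.2]; exact hGvan y (Set.mem_union_left _ hyS) hyz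
      · obtain ⟨c, hc⟩ := hπB _ hyB
        rw [hc, eval_smul_of_isHomogeneous' hG, hGp, mul_zero]
    have h0 := hCB (MvPolynomial.bind₁ (substOf π) G)
      (isHomogeneous_bind₁_substOf π hG) z hzS.1.1 hFvan
    rw [eval_bind₁_substOf, hπA _ hzS.1.2] at h0
    exact h0
end

section
/- Let A and B be positive-dimensional projective linear subspaces of ℙⁿ such that A ∩ B consists of a single point p and A and B together span ℙⁿ. Let Γ ⊆ A ∪ B be a finite set satisfying CB(r) with p ∉ Γ, and set Γ_A = (Γ ∩ A) \ {p} and Γ_B = (Γ ∩ B) \ {p}. Then at least one of the two sets Γ_A and Γ_B ∪ {p} satisfies CB(r). -/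
open MvPolynomial

section Helpers

variable {k : Type*} [Field k] {m : ℕ}

private lemma eval_smul_homog {F : MvPolynomial (Fin m) k} {r : ℕ}
    (hF : F.IsHomogeneous r) (t : k) (v : Fin m → k) :
    eval (t • v) F = t ^ r * eval v F := by
  rw [eval_eq', eval_eq', Finset.mul_sum]
  refine Finset.sum_congr rfl fun d hd => ?_
  have hdeg : ∑ i, d i = r := by
    by_contra h
    have hdd : d.degree = ∑ i, d i :=
      Finset.sum_subset (Finset.subset_univ _)
        (fun i _ hi => Finsupp.notMem_support_iff.mp hi)
    exact mem_support_iff.mp hd (hF.coeff_eq_zero (hdd ▸ h))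
  have hprod : ∏ i, (t • v) i ^ d i = t ^ r * ∏ i, v i ^ d i := by
    simp only [Pi.smul_apply, smul_eq_mul, mul_pow]
    rw [Finset.prod_mul_distrib, Finset.prod_pow_eq_pow_sum, hdeg]
  rw [hprod]; ring

noncomputable def polyComp (L : (Fin m → k) →ₗ[k] (Fin m → k)) (F : MvPolynomial (Fin m) k) :
    MvPolynomial (Fin m) k :=
  aeval (fun i => ∑ j, C (L (Pi.single j 1) i) * X j) F

lemma polyComp_isHomogeneous {L : (Fin m → k) →ₗ[k] (Fin m → k)} {F : MvPolynomial (Fin m) k}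
    {r : ℕ} (hF : F.IsHomogeneous r) : (polyComp L F).IsHomogeneous r := by
  have h := hF.aeval (n := 1) (g := fun i => ∑ j, C (L (Pi.single j 1) i) * X j) ?_
  · simpa [polyComp] using h
  · intro i
    apply IsHomogeneous.sum
    intro j _
    simpa using (isHomogeneous_C _ (L (Pi.single j 1) i)).mul (isHomogeneous_X _ j)

lemma eval_polyComp (L : (Fin m → k) →ₗ[k] (Fin m → k)) (F : MvPolynomial (Fin m) k)
    (v : Fin m → k) : eval v (polyComp L F) = eval (L v) F := by
  have h1 : eval v (polyComp L F) = aeval (fun i => eval v (∑ j, C (L (Pi.single j 1) i) * X j)) F := by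
    rw [polyComp]
    rw [show (aeval (fun i => ∑ j, C (L (Pi.single j 1) i) * X j) F : MvPolynomial (Fin m) k)
        = bind₁ (fun i => ∑ j, C (L (Pi.single j 1) i) * X j) F from rfl]
    have := aeval_bind₁ (S := k) (f := v) (g := fun i => ∑ j, C (L (Pi.single j 1) i) * X j) (φ := F)
    simpa using this
  have harg : (fun i => eval v (∑ j, C (L (Pi.single j 1) i) * X j)) = L v := by
    funext i
    have hv : L v i = ∑ j, v j * L (Pi.single j 1) i := by
      have hvdec : v = ∑ j, v j • (Pi.single j 1 : Fin m → k) := by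
        ext x; simp [Pi.single_apply, Finset.sum_ite_eq', eq_comm]
      conv_lhs => rw [hvdec]
      simp [Finset.sum_apply]
    simp [hv, mul_comm]
  rw [h1, harg, aeval_def, Algebra.algebraMap_self]
  rfl

private lemma exists_proj (A B : Submodule k (Fin m → k)) (hspan : A ⊔ B = ⊤) :
    ∃ π : (Fin m → k) →ₗ[k] (Fin m → k),
      (∀ v ∈ A, π v = v) ∧ (∀ v ∈ B, π v ∈ A ⊓ B) := by
  classical
  obtain ⟨C₀, hC₀⟩ := Submodule.exists_isCompl ((A ⊓ B).comap B.subtype)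
  set C : Submodule k (Fin m → k) := C₀.map B.subtype with hC
  have hCB : C ≤ B := by
    rintro v ⟨c, hc, rfl⟩; exact c.2
  have hsupB : (A ⊓ B) ⊔ C = B := by
    have h := congrArg (Submodule.map B.subtype) hC₀.sup_eq_top
    rwa [Submodule.map_sup, Submodule.map_comap_subtype, inf_eq_right.mpr inf_le_right,
      Submodule.map_subtype_top] at h
  have hcompl : IsCompl A C := by
    constructor
    · rw [disjoint_iff_inf_le]
      rintro v ⟨hvA, c, hcC₀, rfl⟩
      have hmem : c ∈ (A ⊓ B).comap B.subtype := ⟨hvA, c.2⟩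
      have : c ∈ ((A ⊓ B).comap B.subtype) ⊓ C₀ := ⟨hmem, hcC₀⟩
      rw [hC₀.inf_eq_bot] at this
      have hc0 : c = 0 := by simpa using this
      simp [hc0]
    · rw [codisjoint_iff]
      rw [← hspan, ← hsupB, ← sup_assoc, sup_eq_left.mpr (inf_le_left : A ⊓ B ≤ A)]
  set pr := Submodule.projectionOnto A C hcompl with hpr
  refine ⟨A.subtype ∘ₗ pr, fun v hv => ?_, fun v hv => ?_⟩
  · have := Submodule.projectionOnto_apply_left hcompl ⟨v, hv⟩
    exact congrArg (A.subtype) this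
  · have hπA : A.subtype (pr v) ∈ A := (pr v).2
    have hkey : pr (A.subtype (pr v)) = pr v :=
      Submodule.projectionOnto_apply_left hcompl (pr v)
    have hker : v - A.subtype (pr v) ∈ C := by
      rw [← Submodule.projectionOnto_apply_eq_zero_iff hcompl (x := v - A.subtype (pr v))]
      rw [map_sub, hkey, sub_self]
    have hπB : A.subtype (pr v) ∈ B := by
      have := sub_mem hv (hCB hker)
      simpa using this
    exact ⟨hπA, hπB⟩

private lemma glue (A B : Submodule k (Fin m → k)) (hspan : A ⊔ B = ⊤)
    {r : ℕ} (FA FB : MvPolynomial (Fin m) k)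
    (hFA : FA.IsHomogeneous r) (hFB : FB.IsHomogeneous r)
    (hagree : ∀ v ∈ A ⊓ B, eval v FA = eval v FB) :
    ∃ H : MvPolynomial (Fin m) k, H.IsHomogeneous r ∧
      (∀ v ∈ A, eval v H = eval v FA) ∧ (∀ v ∈ B, eval v H = eval v FB) := by
  obtain ⟨πA, hπA1, hπA2⟩ := exists_proj A B hspan
  obtain ⟨πB, hπB1, hπB2⟩ := exists_proj B A (by rwa [sup_comm])
  refine ⟨polyComp πA FA + polyComp πB FB - polyComp (πA ∘ₗ πB) FA, ?_, ?_, ?_⟩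
  · exact ((polyComp_isHomogeneous hFA).add (polyComp_isHomogeneous hFB)).sub
      (polyComp_isHomogeneous hFA)
  · intro v hv
    have hw : πB v ∈ B ⊓ A := hπB2 v hv
    have hπAw : πA (πB v) = πB v := hπA1 _ hw.2
    have hagw : eval (πB v) FA = eval (πB v) FB := hagree (πB v) ⟨hw.2, hw.1⟩
    simp only [map_sub, map_add, eval_polyComp, LinearMap.comp_apply, hπA1 v hv, hπAw, hagw]
    ring
  · intro v hv
    simp only [map_sub, map_add, eval_polyComp, LinearMap.comp_apply, hπB1 v hv]
    ring

end Helpers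

/-- Two planes meeting at a point, part 2: if `p ∉ Γ`, at least one of `Γ_A` and
`Γ_B ∪ {p}` satisfies `CB(r)`. -/
theorem union_two_at_point_2 {k : Type*} [Field k] [Infinite k] {n : ℕ} (r : ℕ)
    (A B : Submodule k (Fin (n + 1) → k))
    (hA : 2 ≤ Module.finrank k A) (hB : 2 ≤ Module.finrank k B)
    (p : ProjSpace k n) (hp : projSet A ∩ projSet B = {p})
    (hspan : A ⊔ B = ⊤)
    (Γ : Set (ProjSpace k n)) (hfin : Γ.Finite)
    (hsub : Γ ⊆ projSet A ∪ projSet B) (hCB : IsCB r Γ)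
    (hpnot : p ∉ Γ) :
    IsCB r ((Γ ∩ projSet A) \ {p}) ∨ IsCB r (((Γ ∩ projSet B) \ {p}) ∪ {p}) := by
  classical
  have hpAB : p ∈ projSet A ∩ projSet B := hp ▸ rfl
  have hpA : p.rep ∈ A := hpAB.1
  have hpB : p.rep ∈ B := hpAB.2
  have hmem : ∀ x : ProjSpace k n, x.rep ∈ A → x.rep ∈ B → x = p := by
    intro x h1 h2
    have : x ∈ projSet A ∩ projSet B := ⟨h1, h2⟩
    rw [hp] at this
    exact this
  -- A ⊓ B is the line spanned by p.rep
  have hAB : A ⊓ B = Submodule.span k {p.rep} := by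
    apply le_antisymm
    · intro v hv
      by_cases hv0 : v = 0
      · simp [hv0]
      · obtain ⟨a, ha⟩ := Projectivization.exists_smul_eq_mk_rep k v hv0
        have hrA : (Projectivization.mk k v hv0).rep ∈ A := by
          rw [← ha]; exact Submodule.smul_mem _ _ hv.1
        have hrB : (Projectivization.mk k v hv0).rep ∈ B := by
          rw [← ha]; exact Submodule.smul_mem _ _ hv.2
        have hmk : Projectivization.mk k v hv0 = p := hmem _ hrA hrB
        rw [hmk] at ha
        have : v = (a⁻¹ : kˣ) • p.rep := by
          rw [← ha, smul_smul]; simp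
        rw [this]
        exact Submodule.smul_mem _ _ (Submodule.mem_span_singleton_self _)
    · rw [Submodule.span_le, Set.singleton_subset_iff]
      exact ⟨hpA, hpB⟩
  -- agreement on the line from agreement at p.rep
  have hline : ∀ (FA FB : MvPolynomial (Fin (n + 1)) k), FA.IsHomogeneous r →
      FB.IsHomogeneous r → eval p.rep FA = eval p.rep FB →
      ∀ v ∈ A ⊓ B, eval v FA = eval v FB := by
    intro FA FB hFA hFB hpe v hv
    rw [hAB, Submodule.mem_span_singleton] at hv
    obtain ⟨t, rfl⟩ := hv
    rw [eval_smul_homog hFA, eval_smul_homog hFB, hpe]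
  by_cases hR : IsCB r (((Γ ∩ projSet B) \ {p}) ∪ {p})
  · exact Or.inr hR
  left
  unfold IsCB at hR
  push_neg at hR
  obtain ⟨G, hGhom, y, hy, hGvan, hGy⟩ := hR
  -- Step 1: the failing point must be p
  have hyp : y = p := by
    by_contra hyne
    have hyB : y ∈ (Γ ∩ projSet B) \ {p} := by
      rcases hy with h | h
      · exact h
      · exact absurd h hyne
    have hGp : eval p.rep G = 0 := hGvan p (Or.inr rfl) (Ne.symm hyne)
    obtain ⟨H, hHhom, hHA, hHB⟩ := glue A B hspan 0 G (isHomogeneous_zero _ _ r) hGhom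
      (hline 0 G (isHomogeneous_zero _ _ r) hGhom (by simp [hGp]))
    have hvan : ∀ z ∈ Γ, z ≠ y → eval z.rep H = 0 := by
      intro z hz hzy
      rcases hsub hz with hzA | hzB
      · rw [hHA z.rep hzA]; simp
      · rw [hHB z.rep hzB]
        have hzp : z ≠ p := fun h => hpnot (h ▸ hz)
        exact hGvan z (Or.inl ⟨⟨hz, hzB⟩, hzp⟩) hzy
    have := hCB H hHhom y hyB.1.1 hvan
    rw [hHB y.rep hyB.1.2] at this
    exact hGy this
  rw [hyp] at hGvan hGy
  -- Now G vanishes on Γ_B and eval p.rep G ≠ 0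
  have hGvanB : ∀ z ∈ (Γ ∩ projSet B) \ {p}, eval z.rep G = 0 := by
    intro z hz
    exact hGvan z (Or.inl hz) hz.2
  -- Prove CB(r) for Γ_A
  intro F hFhom x hx hFvan
  have hxΓ : x ∈ Γ := hx.1.1
  have hxA : x.rep ∈ A := hx.1.2
  set c := eval p.rep F with hc
  set d := eval p.rep G with hd
  have hFB : (C (c * d⁻¹) * G : MvPolynomial (Fin (n + 1)) k).IsHomogeneous r := by
    simpa using (isHomogeneous_C _ (c * d⁻¹)).mul hGhom
  have hd0 : d ≠ 0 := hGy
  have hpe : eval p.rep F = eval p.rep (C (c * d⁻¹) * G) := by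
    simp only [map_mul, eval_C, ← hd, ← hc]
    field_simp
  obtain ⟨H, hHhom, hHA, hHB⟩ := glue A B hspan F (C (c * d⁻¹) * G) hFhom hFB
    (hline F _ hFhom hFB hpe)
  have hvan : ∀ z ∈ Γ, z ≠ x → eval z.rep H = 0 := by
    intro z hz hzx
    have hzp : z ≠ p := fun h => hpnot (h ▸ hz)
    rcases hsub hz with hzA | hzB
    · rw [hHA z.rep hzA]
      exact hFvan z ⟨⟨hz, hzA⟩, hzp⟩ hzx
    · rw [hHB z.rep hzB]
      rw [map_mul, hGvanB z ⟨⟨hz, hzB⟩, hzp⟩, mul_zero]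
  have := hCB H hHhom x hxΓ hvan
  rwa [hHA x.rep hxA] at this
end

section
/- Balancing proposition: Suppose Γ ⊆ ℙⁿ is a finite set satisfying CB(r) that is contained in a skew plane configuration 𝒫 = P₁ ∪ … ∪ P_k with Γ ∩ Pᵢ nonempty for all i. Then one of the following holds: (i) each plane Pᵢ contains at least max(ℓ(𝒫), r + 2) points of Γ; or (ii) some plane Pᵢ contains fewer than ℓ(𝒫) points of Γ, and moreover ℓ(𝒫) ≥ r + 2. -/
open MvPolynomial

lemma aux1 {k V : Type*} [Field k] [AddCommGroup V] [Module k V]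
    (P Q : Submodule k V) (hPQ : P ⊓ Q = ⊥) (x y : V) (hx : x ∈ P) (hy : y ∈ P)
    (hxy : ∀ c : k, x ≠ c • y) : x ∉ Q ⊔ Submodule.span k {y} := by
  intro h
  rw [Submodule.mem_sup] at h
  obtain ⟨q, hq, z, hz, hsum⟩ := h
  obtain ⟨c, rfl⟩ := Submodule.mem_span_singleton.mp hz
  have hqP : q ∈ P := by
    have : q = x - c • y := by rw [← hsum]; abel
    rw [this]; exact P.sub_mem hx (P.smul_mem c hy)
  have : q ∈ P ⊓ Q := ⟨hqP, hq⟩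
  rw [hPQ] at this
  simp only [Submodule.mem_bot] at this
  subst this
  exact hxy c (by rw [← hsum, zero_add])

lemma aux2 {k : Type*} [Field k] {m : ℕ} (W : Submodule k (Fin m → k)) (x : Fin m → k)
    (hx : x ∉ W) : ∃ φ : Module.Dual k (Fin m → k), (∀ w ∈ W, φ w = 0) ∧ φ x ≠ 0 := by
  have h0 : W.mkQ x ≠ 0 := by
    simpa [Submodule.Quotient.mk_eq_zero] using hx
  obtain ⟨ψ, hψ⟩ : ∃ ψ : Module.Dual k ((Fin m → k) ⧸ W), ψ (W.mkQ x) ≠ 0 := by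
    by_contra hc
    push_neg at hc
    exact h0 ((Module.forall_dual_apply_eq_zero_iff k _).mp hc)
  refine ⟨ψ.comp W.mkQ, fun w hw => ?_, hψ⟩
  have : W.mkQ w = 0 := by simpa [Submodule.Quotient.mk_eq_zero] using hw
  simp [this]

noncomputable def linPoly {k : Type*} [Field k] {m : ℕ} (φ : Module.Dual k (Fin m → k)) :
    MvPolynomial (Fin m) k :=
  ∑ i, C (φ fun j => if i = j then 1 else 0) * X i

lemma linPoly_isHomogeneous {k : Type*} [Field k] {m : ℕ} (φ : Module.Dual k (Fin m → k)) :
    (linPoly φ).IsHomogeneous 1 := by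
  apply MvPolynomial.IsHomogeneous.sum
  intro i _
  simpa using (isHomogeneous_C _ _).mul (isHomogeneous_X _ i)

lemma eval_linPoly {k : Type*} [Field k] {m : ℕ} (φ : Module.Dual k (Fin m → k))
    (v : Fin m → k) : MvPolynomial.eval v (linPoly φ) = φ v := by
  rw [LinearMap.pi_apply_eq_sum_univ φ v, linPoly]
  simp [mul_comm, smul_eq_mul]

lemma key {k : Type*} [Field k] {n : ℕ} (r : ℕ) (Γ : Set (ProjSpace k n)) (hfin : Γ.Finite)
    (hCB : IsCB r Γ) (C : PlaneConfig k n) (hskew : C.Skew) (hsub : Γ ⊆ C.points)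
    (i : Fin C.length) (hnei : (Γ ∩ projSet (C.P i)).Nonempty) :
    r + 2 ≤ (Γ ∩ projSet (C.P i)).ncard ∨ r + 2 ≤ C.length := by
  classical
  by_contra hcon
  push_neg at hcon
  obtain ⟨hd, hl⟩ := hcon
  obtain ⟨x, hxΓ, hxP⟩ := hnei
  have hSfin : (Γ ∩ projSet (C.P i)).Finite := hfin.inter_of_left _
  have hTfin : ((Γ ∩ projSet (C.P i)) \ {x}).Finite := hSfin.diff
  set Tfin := hTfin.toFinset with hTfindef
  have hTcard : Tfin.card ≤ r := by
    have hmem : x ∈ Γ ∩ projSet (C.P i) := ⟨hxΓ, hxP⟩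
    have h1 := Set.ncard_diff_singleton_of_mem hmem
    have h2 : ((Γ ∩ projSet (C.P i)) \ {x}).ncard = Tfin.card :=
      Set.ncard_eq_toFinset_card _ hTfin
    omega
  set J := (Finset.univ : Finset (Fin C.length)).erase i with hJdef
  have hJcard : J.card ≤ r := by
    have h1 := Finset.card_erase_of_mem (Finset.mem_univ i)
    rw [← hJdef] at h1
    have h2 : (Finset.univ : Finset (Fin C.length)).card = C.length := by simp
    omega
  set u : Fin r → Submodule k (Fin (n + 1) → k) := fun t =>
    if h : (t : ℕ) < J.card then
      C.P ((J.equivFin.symm ⟨t, h⟩ : {a // a ∈ J}) : Fin C.length) else ⊥ with hudef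
  set pt : Fin r → (Fin (n + 1) → k) := fun t =>
    if h : (t : ℕ) < Tfin.card then
      ((Tfin.equivFin.symm ⟨t, h⟩ : {a // a ∈ Tfin}) : ProjSpace k n).rep else 0 with hptdef
  have hu : ∀ t, C.P i ⊓ u t = ⊥ := by
    intro t
    simp only [hudef]
    split_ifs with h
    · have hj := (J.equivFin.symm ⟨t, h⟩).2
      have hj' : ((J.equivFin.symm ⟨t, h⟩ : {a // a ∈ J}) : Fin C.length) ≠ i :=
        Finset.ne_of_mem_erase hj
      exact hskew i _ (Ne.symm hj')
    · exact inf_bot_eq _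
  have hpt : ∀ t, pt t ∈ C.P i ∧ ∀ c : k, x.rep ≠ c • pt t := by
    intro t
    simp only [hptdef]
    split_ifs with h
    · set y : ProjSpace k n := ((Tfin.equivFin.symm ⟨t, h⟩ : {a // a ∈ Tfin}) : ProjSpace k n)
        with hydef
    
      have hyT : y ∈ (Γ ∩ projSet (C.P i)) \ {x} :=
        hTfin.mem_toFinset.mp (Tfin.equivFin.symm ⟨t, h⟩).2
      refine ⟨hyT.1.2, fun c hc => ?_⟩
      have hc0 : c ≠ 0 := by
        rintro rfl
        rw [zero_smul] at hc
        exact x.rep_nonzero hc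
      have hxy : x = y := by
        rw [← Projectivization.mk_rep x, ← Projectivization.mk_rep y,
          Projectivization.mk_eq_mk_iff']
        exact ⟨c, hc.symm⟩
      exact hyT.2 (by rw [← hxy]; exact rfl)
    · exact ⟨Submodule.zero_mem _, fun c hc => x.rep_nonzero (by rw [hc, smul_zero])⟩
  have hxW : ∀ t, x.rep ∉ u t ⊔ Submodule.span k {pt t} := fun t =>
    aux1 (C.P i) (u t) (hu t) x.rep (pt t) hxP (hpt t).1 (hpt t).2
  choose φ hφ0 hφx using fun t => aux2 (u t ⊔ Submodule.span k {pt t}) x.rep (hxW t)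
  have hFhom : (∏ t : Fin r, linPoly (φ t)).IsHomogeneous r := by
    have := MvPolynomial.IsHomogeneous.prod Finset.univ (fun t => linPoly (φ t))
      (fun _ => 1) (fun t _ => linPoly_isHomogeneous _)
    simpa using this
  have hFvan : ∀ y ∈ Γ, y ≠ x →
      MvPolynomial.eval y.rep (∏ t : Fin r, linPoly (φ t)) = 0 := by
    intro y hyΓ hyx
    have hy := hsub hyΓ
    rw [PlaneConfig.points, Set.mem_iUnion] at hy
    obtain ⟨j, hyj⟩ := hy
    have hyj' : y.rep ∈ C.P j := hyj
    by_cases hji : j = i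
    · subst hji
      have hyT : y ∈ Tfin := hTfin.mem_toFinset.mpr ⟨⟨hyΓ, hyj'⟩, by simp [hyx]⟩
      set t0 := Tfin.equivFin ⟨y, hyT⟩ with ht0def
      have ht : (t0 : ℕ) < r := lt_of_lt_of_le t0.isLt hTcard
      set t : Fin r := ⟨t0, ht⟩ with htdef
      have hpe : pt t = y.rep := by
        simp only [hptdef]
        split_ifs with h'
        · have he : (⟨(t : ℕ), h'⟩ : Fin Tfin.card) = t0 := Fin.ext rfl
          rw [he, ht0def, Equiv.symm_apply_apply]
        · exact absurd t0.isLt h'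
      rw [map_prod]
      apply Finset.prod_eq_zero (Finset.mem_univ t)
      rw [eval_linPoly]
      apply hφ0 t
      rw [← hpe]
      exact Submodule.mem_sup_right (Submodule.mem_span_singleton_self _)
    · have hjJ : j ∈ J := by rw [hJdef, Finset.mem_erase]; exact ⟨hji, Finset.mem_univ j⟩
      set t0 := J.equivFin ⟨j, hjJ⟩ with ht0def
      have ht : (t0 : ℕ) < r := lt_of_lt_of_le t0.isLt hJcard
      set t : Fin r := ⟨t0, ht⟩ with htdef
      have hpe : u t = C.P j := by
        simp only [hudef]
        split_ifs with h'
        · have he : (⟨(t : ℕ), h'⟩ : Fin J.card) = t0 := Fin.ext rfl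
          rw [he, ht0def, Equiv.symm_apply_apply]
        · exact absurd t0.isLt h'
      rw [map_prod]
      apply Finset.prod_eq_zero (Finset.mem_univ t)
      rw [eval_linPoly]
      apply hφ0 t
      exact Submodule.mem_sup_left (by rw [hpe]; exact hyj')
  have h0 := hCB _ hFhom x hxΓ hFvan
  rw [map_prod] at h0
  obtain ⟨t, _, ht⟩ := Finset.prod_eq_zero_iff.mp h0
  rw [eval_linPoly] at ht
  exact hφx t ht

/-- Balancing proposition: for `Γ` satisfying `CB(r)` contained in a skew plane
configuration meeting every plane, either every plane contains at least
`max(ℓ, r + 2)` points of `Γ`, or some plane contains fewer than `ℓ` points and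
moreover `ℓ ≥ r + 2`, where `ℓ` is the length of the configuration. -/
theorem balancing {k : Type*} [Field k] [Infinite k] {n : ℕ} (r : ℕ)
    (Γ : Set (ProjSpace k n)) (hfin : Γ.Finite) (hCB : IsCB r Γ)
    (C : PlaneConfig k n) (hskew : C.Skew) (hsub : Γ ⊆ C.points)
    (hne : ∀ i, (Γ ∩ projSet (C.P i)).Nonempty) :
    (∀ i, max C.length (r + 2) ≤ (Γ ∩ projSet (C.P i)).ncard) ∨
    ((∃ i, (Γ ∩ projSet (C.P i)).ncard < C.length) ∧ r + 2 ≤ C.length) := by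
  rcases le_or_gt C.length (r + 1) with hl | hl
  · left
    intro i
    rcases key r Γ hfin hCB C hskew hsub i (hne i) with h | h
    · exact max_le (by omega) h
    · omega
  · by_cases hall : ∀ i, C.length ≤ (Γ ∩ projSet (C.P i)).ncard
    · left
      intro i
      exact max_le (hall i) (le_trans (by omega) (hall i))
    · right
      push_neg at hall
      exact ⟨hall, by omega⟩
end

section
/- Length bound for maximal-length configurations: Let d ≥ 2 and let Γ ⊆ ℙⁿ be a finite set satisfying CB(r) with |Γ| ≤ (d+1)r + 1. Suppose Γ lies on a skew plane configuration 𝒫 = P₁ ∪ … ∪ P_k of dimension d, with Γ ∩ Pᵢ nonempty for all i. If d − 1 ≤ r ≤ 2(d − 1), then the length of 𝒫 is at most d − 1 (in particular, 𝒫 is not a union of d pairwise disjoint lines). -/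
open MvPolynomial

-- aux: proj points equal if rep in span of rep
lemma proj_eq_of_mem_span {k : Type*} [Field k] {n : ℕ} {x y : ProjSpace k n}
    (h : x.rep ∈ Submodule.span k {y.rep}) : x = y := by
  obtain ⟨c, hc⟩ := Submodule.mem_span_singleton.mp h
  have hc0 : c ≠ 0 := by
    rintro rfl
    exact x.rep_nonzero (by simpa using hc.symm)
  rw [← Projectivization.mk_rep x, ← Projectivization.mk_rep y,
    Projectivization.mk_eq_mk_iff]
  exact ⟨Units.mk0 c hc0, hc⟩

lemma not_mem_sup {k V : Type*} [Field k] [AddCommGroup V] [Module k V]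
    (Pi Q : Submodule k V) (h : Q ⊓ Pi = ⊥) {p v : V}
    (hp : p ∈ Pi) (hv : v ∈ Pi) (hpv : p ∉ Submodule.span k {v}) :
    p ∉ Q ⊔ Submodule.span k {v} := by
  intro hmem
  obtain ⟨q, hq, w, hw, hsum⟩ := Submodule.mem_sup.mp hmem
  have hwPi : w ∈ Pi := Submodule.span_le.mpr (by simpa using hv) hw
  have hq0 : q ∈ Q ⊓ Pi := ⟨hq, by
    have : q = p - w := by rw [← hsum]; abel
    rw [this]; exact Submodule.sub_mem _ hp hwPi⟩
  rw [h, Submodule.mem_bot] at hq0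
  apply hpv
  rw [← hsum, hq0, zero_add]
  exact hw

lemma exists_dual {k V : Type*} [Field k] [AddCommGroup V] [Module k V]
    (W : Submodule k V) (p : V) (hp : p ∉ W) :
    ∃ φ : Module.Dual k V, (∀ w ∈ W, φ w = 0) ∧ φ p ≠ 0 := by
  have h0 : W.mkQ p ≠ 0 := by
    simpa [Submodule.Quotient.mk_eq_zero] using hp
  have h1 : ¬ ∀ g : Module.Dual k (V ⧸ W), g (W.mkQ p) = 0 := by
    rw [Module.forall_dual_apply_eq_zero_iff k]
    exact h0
  push_neg at h1
  obtain ⟨g, hg⟩ := h1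
  refine ⟨g.comp W.mkQ, fun w hw => ?_, hg⟩
  simp [Submodule.Quotient.mk_eq_zero _ |>.mpr hw]

lemma exists_linear_poly {k : Type*} [Field k] {n : ℕ}
    (W : Submodule k (Fin (n + 1) → k)) (p : Fin (n + 1) → k) (hp : p ∉ W) :
    ∃ F : MvPolynomial (Fin (n + 1)) k, F.IsHomogeneous 1 ∧
      (∀ w ∈ W, MvPolynomial.eval w F = 0) ∧ MvPolynomial.eval p F ≠ 0 := by
  obtain ⟨φ, hφW, hφp⟩ := exists_dual W p hp
  refine ⟨∑ j, MvPolynomial.C (φ (Pi.single j 1)) * MvPolynomial.X j, ?_, ?_, ?_⟩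
  · exact MvPolynomial.IsHomogeneous.sum _ _ _ fun j _ => isHomogeneous_C_mul_X _ j
  all_goals {
    have key : ∀ v : Fin (n + 1) → k,
        MvPolynomial.eval v (∑ j, MvPolynomial.C (φ (Pi.single j 1)) * MvPolynomial.X j) = φ v := by
      intro v
      rw [map_sum]
      have : ∀ j, MvPolynomial.eval v (MvPolynomial.C (φ (Pi.single j 1)) * MvPolynomial.X j)
          = φ (Pi.single j (v j)) := by
        intro j
        have : Pi.single j (v j) = v j • (Pi.single j 1 : Fin (n+1) → k) := by
          rw [← Pi.single_smul]; simp
        simp [this, map_smul, mul_comm]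
      rw [Finset.sum_congr rfl fun j _ => this j, ← map_sum]
      congr 1
      exact Finset.univ_sum_single v
    first
    | exact fun w hw => by rw [key]; exact hφW w hw
    | exact by rw [key]; exact hφp
  }

/-- Length bound for maximal-length configurations: if `Γ` is `CB(r)` with at most
`(d+1)r + 1` points, lying on a skew plane configuration of dimension `d` and meeting
every plane, and `d - 1 ≤ r ≤ 2(d - 1)`, then the configuration has length at most
`d - 1`. -/
theorem d_lines_bound {k : Type*} [Field k] [Infinite k] {n : ℕ} (r d : ℕ) (hd : 2 ≤ d)
    (Γ : Set (ProjSpace k n)) (hfin : Γ.Finite) (hCB : IsCB r Γ)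
    (hcard : Γ.ncard ≤ (d + 1) * r + 1)
    (C : PlaneConfig k n) (hskew : C.Skew) (hdim : C.dim = d)
    (hsub : Γ ⊆ C.points) (hne : ∀ i, (Γ ∩ projSet (C.P i)).Nonempty)
    (hr1 : d - 1 ≤ r) (hr2 : r ≤ 2 * (d - 1)) :
    C.length ≤ d - 1 := by
  by_contra hcon
  push_neg at hcon
  classical
  have hL_le : C.length ≤ d := by
    have h1 : ∀ i : Fin C.length, 1 ≤ Module.finrank k (C.P i) - 1 := fun i => by
      have := C.posdim i; omega
    calc C.length = ∑ _i : Fin C.length, 1 := by simp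
      _ ≤ ∑ i, (Module.finrank k (C.P i) - 1) := Finset.sum_le_sum fun i _ => h1 i
      _ = d := hdim
  have hLd : C.length = d := by omega
  -- Key claim: every plane contains at least r + 2 points of Γ
  have key : ∀ i : Fin C.length, r + 2 ≤ (Γ ∩ projSet (C.P i)).ncard := by
    intro i
    by_contra hkey
    push_neg at hkey
    obtain ⟨x, hxΓ, hxP⟩ := hne i
    have hΓifin : (Γ ∩ projSet (C.P i)).Finite := hfin.inter_of_left _
    set S : Set (ProjSpace k n) := (Γ ∩ projSet (C.P i)) \ {x} with hSdef
    have hSfin : S.Finite := hΓifin.diff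
    have hxmem : x ∈ Γ ∩ projSet (C.P i) := ⟨hxΓ, hxP⟩
    have hScard : S.ncard ≤ r := by
      have h1 : S.ncard = (Γ ∩ projSet (C.P i)).ncard - 1 :=
        Set.ncard_diff_singleton_of_mem hxmem
      have h2 : 0 < (Γ ∩ projSet (C.P i)).ncard :=
        (Set.ncard_pos hΓifin).mpr ⟨x, hxmem⟩
      omega
    set sl : List (ProjSpace k n) := hSfin.toFinset.toList with hsldef
    have hsl_len : sl.length ≤ r := by
      rw [hsldef, Finset.length_toList, ← Set.ncard_eq_toFinset_card S hSfin]
      exact hScard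
    set jl : List (Fin C.length) := (Finset.univ.erase i).toList with hjldef
    have hjl_len : jl.length ≤ r := by
      rw [hjldef, Finset.length_toList, Finset.card_erase_of_mem (Finset.mem_univ i),
        Finset.card_univ, Fintype.card_fin, hLd]
      exact hr1
    set Qf : Fin r → Submodule k (Fin (n + 1) → k) := fun t =>
      if h : (t : ℕ) < jl.length then C.P (jl.get ⟨t, h⟩) else ⊥ with hQf
    set vf : Fin r → (Fin (n + 1) → k) := fun t =>
      if h : (t : ℕ) < sl.length then (sl.get ⟨t, h⟩).rep else 0 with hvf
    have hnotmem : ∀ t : Fin r, x.rep ∉ Qf t ⊔ Submodule.span k {vf t} := by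
      intro t
      apply not_mem_sup (C.P i)
      · -- Qf t ⊓ C.P i = ⊥
        simp only [hQf]
        by_cases h : (t : ℕ) < jl.length
        · rw [dif_pos h]
          have hj : jl.get ⟨t, h⟩ ∈ Finset.univ.erase i := by
            rw [← Finset.mem_toList, ← hjldef]; exact List.get_mem _ _
          exact hskew _ i (Finset.ne_of_mem_erase hj)
        · rw [dif_neg h]; exact bot_inf_eq _
      · exact hxP
      · -- vf t ∈ C.P i
        simp only [hvf]
        by_cases h : (t : ℕ) < sl.length
        · rw [dif_pos h]
          have hy : sl.get ⟨t, h⟩ ∈ hSfin.toFinset := by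
            rw [← Finset.mem_toList, ← hsldef]; exact List.get_mem _ _
          rw [Set.Finite.mem_toFinset] at hy
          exact hy.1.2
        · rw [dif_neg h]; exact Submodule.zero_mem _
      · -- x.rep ∉ span {vf t}
        simp only [hvf]
        by_cases h : (t : ℕ) < sl.length
        · rw [dif_pos h]
          intro hmem
          have hy : sl.get ⟨t, h⟩ ∈ hSfin.toFinset := by
            rw [← Finset.mem_toList, ← hsldef]; exact List.get_mem _ _
          rw [Set.Finite.mem_toFinset] at hy
          exact hy.2 (by rw [Set.mem_singleton_iff, ← proj_eq_of_mem_span hmem])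
        · rw [dif_neg h, Submodule.span_zero_singleton, Submodule.mem_bot]
          exact x.rep_nonzero
    choose F hFhom hFvan hFx using fun t : Fin r =>
      exists_linear_poly _ x.rep (hnotmem t)
    set G : MvPolynomial (Fin (n + 1)) k := ∏ t : Fin r, F t with hGdef
    have hGhom : G.IsHomogeneous r := by
      have := MvPolynomial.IsHomogeneous.prod Finset.univ F (fun _ => 1)
        (fun t _ => hFhom t)
      simpa using this
    have hvan : ∀ y ∈ Γ, y ≠ x → MvPolynomial.eval y.rep G = 0 := by
      intro y hyΓ hyx
      obtain ⟨U, ⟨j, rfl⟩, hyU⟩ := hsub hyΓ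
      by_cases hji : j = i
      · subst hji
        have hyS : y ∈ S := ⟨⟨hyΓ, hyU⟩, by simpa using hyx⟩
        rw [hGdef, map_prod]
        have hysl : y ∈ sl := by
          rw [hsldef, Finset.mem_toList, Set.Finite.mem_toFinset]; exact hyS
        obtain ⟨idx, hidx⟩ := List.mem_iff_get.mp hysl
        refine Finset.prod_eq_zero
          (Finset.mem_univ (⟨idx.1, lt_of_lt_of_le idx.2 hsl_len⟩ : Fin r)) ?_
        apply hFvan
        apply Submodule.mem_sup_right
        have hvf_eq : vf ⟨idx.1, lt_of_lt_of_le idx.2 hsl_len⟩ = y.rep := by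
          simp only [hvf, Fin.val_mk]
          rw [dif_pos idx.2, ← hidx]
        rw [hvf_eq]
        exact Submodule.mem_span_singleton_self _
      · rw [hGdef, map_prod]
        have hjerase : j ∈ Finset.univ.erase i := Finset.mem_erase.mpr ⟨hji, Finset.mem_univ j⟩
        have hjjl : j ∈ jl := by rw [hjldef, Finset.mem_toList]; exact hjerase
        obtain ⟨idx, hidx⟩ := List.mem_iff_get.mp hjjl
        refine Finset.prod_eq_zero
          (Finset.mem_univ (⟨idx.1, lt_of_lt_of_le idx.2 hjl_len⟩ : Fin r)) ?_
        apply hFvan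
        apply Submodule.mem_sup_left
        have hQf_eq : Qf ⟨idx.1, lt_of_lt_of_le idx.2 hjl_len⟩ = C.P j := by
          simp only [hQf, Fin.val_mk]
          rw [dif_pos idx.2, ← hidx]
        rw [hQf_eq]
        exact hyU
    have hzero := hCB G hGhom x hxΓ hvan
    rw [hGdef, map_prod] at hzero
    exact (Finset.prod_ne_zero_iff.mpr fun t _ => hFx t) hzero
  -- Counting
  set Gi : Fin C.length → Finset (ProjSpace k n) := fun i =>
    hfin.toFinset.filter (fun y => y.rep ∈ C.P i) with hGi
  have hGicard : ∀ i, r + 2 ≤ (Gi i).card := by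
    intro i
    have : Γ ∩ projSet (C.P i) = ↑(Gi i) := by
      ext y
      simp [hGi, projSet, Set.Finite.mem_toFinset]
    have h2 := key i
    rwa [this, Set.ncard_coe_finset] at h2
  have hsumcard : ∑ i, (Gi i).card ≤ Γ.ncard := by
    rw [← Finset.card_biUnion]
    · calc (Finset.univ.biUnion Gi).card ≤ hfin.toFinset.card :=
          Finset.card_le_card (Finset.biUnion_subset.mpr fun i _ =>
            Finset.filter_subset _ _)
        _ = Γ.ncard := (Set.ncard_eq_toFinset_card Γ hfin).symm
    · intro a _ b _ hab
      rw [Function.onFun, Finset.disjoint_left]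
      intro y hya hyb
      rw [hGi] at hya hyb
      simp only [Finset.mem_filter] at hya hyb
      have : y.rep ∈ C.P a ⊓ C.P b := ⟨hya.2, hyb.2⟩
      rw [hskew a b hab, Submodule.mem_bot] at this
      exact y.rep_nonzero this
  have hlow : d * (r + 2) ≤ ∑ i, (Gi i).card := by
    calc d * (r + 2) = ∑ _i : Fin C.length, (r + 2) := by
          rw [Finset.sum_const, Finset.card_univ, Fintype.card_fin, hLd, smul_eq_mul]
      _ ≤ ∑ i, (Gi i).card := Finset.sum_le_sum fun i _ => hGicard i
  have hfinal : d * (r + 2) ≤ (d + 1) * r + 1 := le_trans hlow (le_trans hsumcard hcard)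
  have e1 : d * (r + 2) = d * r + 2 * d := by ring
  have e2 : (d + 1) * r = d * r + r := by ring
  have h2d : 2 * d ≤ r + 1 := by omega
  omega
end

section
/- Case r = 1: Let d ≥ 0 and let Γ ⊆ ℙⁿ be a finite set satisfying CB(1) with |Γ| ≤ d + 2. Then Γ lies on a projective linear subspace of dimension at most d (i.e., the linear span of Γ has dimension at most d). -/
open MvPolynomial

private lemma sep_lemma {k : Type*} [Field k] {n : ℕ} (W : Submodule k (Fin (n+1) → k))
    (v : Fin (n+1) → k) (hv : v ∉ W) :
    ∃ f : (Fin (n+1) → k) →ₗ[k] k, (∀ w ∈ W, f w = 0) ∧ f v ≠ 0 := by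
  have h : W.mkQ v ≠ 0 := by
    simpa [Submodule.mkQ_apply, Submodule.Quotient.mk_eq_zero W] using hv
  have := (Module.forall_dual_apply_eq_zero_iff k (W.mkQ v)).not.mpr h
  push_neg at this
  obtain ⟨g, hg⟩ := this
  refine ⟨g.comp W.mkQ, fun w hw => ?_, hg⟩
  have : W.mkQ w = 0 := (Submodule.Quotient.mk_eq_zero W).2 hw
  simp [this]

private lemma eval_linear {k : Type*} [Field k] {n : ℕ} (f : (Fin (n+1) → k) →ₗ[k] k)
    (v : Fin (n+1) → k) :
    eval v (∑ i, C (f (Pi.single i 1)) * X i) = f v := by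
  rw [LinearMap.pi_apply_eq_sum_univ]
  simp only [map_sum, map_mul, eval_C, eval_X]
  refine Finset.sum_congr rfl fun i _ => ?_
  rw [mul_comm]
  have hps : (Pi.single i (1:k) : Fin (n+1) → k) = fun j => if i = j then 1 else 0 :=
    funext fun j => by simp [Pi.single_apply, eq_comm]
  rw [hps, smul_eq_mul]

private lemma homog_linear {k : Type*} [Field k] {n : ℕ} (f : (Fin (n+1) → k) →ₗ[k] k) :
    ((∑ i, C (f (Pi.single i 1)) * X i : MvPolynomial (Fin (n+1)) k)).IsHomogeneous 1 :=
  IsHomogeneous.sum _ _ _ fun i _ => (isHomogeneous_C _ _).mul (isHomogeneous_X _ _)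

/-- Case `r = 1`: a finite set satisfying `CB(1)` with at most `d + 2` points lies on a
projective linear subspace of dimension at most `d`. -/
theorem case_r_eq_one {k : Type*} [Field k] [Infinite k] {n : ℕ} (d : ℕ)
    (Γ : Set (ProjSpace k n)) (hfin : Γ.Finite) (hCB : IsCB 1 Γ)
    (hcard : Γ.ncard ≤ d + 2) :
    ∃ W : Submodule k (Fin (n + 1) → k),
      Module.finrank k W ≤ d + 1 ∧ Γ ⊆ projSet W := by
  rcases Γ.eq_empty_or_nonempty with hΓ | ⟨x₀, hx₀⟩
  · exact ⟨⊥, by simp, by simp [hΓ]⟩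
  · set S : Set (Fin (n+1) → k) := Projectivization.rep '' (Γ \ {x₀}) with hS
    set W := Submodule.span k S with hW
    have hmemS : ∀ y ∈ Γ, y ≠ x₀ → (Projectivization.rep y : Fin (n+1) → k) ∈ W :=
      fun y hy hne => Submodule.subset_span ⟨y, ⟨hy, hne⟩, rfl⟩
    have hx₀mem : (Projectivization.rep x₀ : Fin (n+1) → k) ∈ W := by
      by_contra hvnot
      obtain ⟨f, hfW, hfv⟩ := sep_lemma W _ hvnot
      have := hCB (∑ i, C (f (Pi.single i 1)) * X i) (homog_linear f) x₀ hx₀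
        (fun y hy hne => by rw [eval_linear]; exact hfW _ (hmemS y hy hne))
      rw [eval_linear] at this
      exact hfv this
    refine ⟨W, ?_, ?_⟩
    · have hSfin : S.Finite := (hfin.diff).image _
      have h1 : Module.finrank k W ≤ hSfin.toFinset.card := by
        have := finrank_span_finset_le_card (R := k) hSfin.toFinset
        rwa [hSfin.coe_toFinset] at this
      have h2 : hSfin.toFinset.card = S.ncard := (Set.ncard_eq_toFinset_card S hSfin).symm
      have h3 : S.ncard ≤ (Γ \ {x₀}).ncard := Set.ncard_image_le (hfin.diff)
      have h4 : (Γ \ {x₀}).ncard = Γ.ncard - 1 := Set.ncard_diff_singleton_of_mem hx₀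
      have h5 : 1 ≤ Γ.ncard := (Set.ncard_pos hfin).2 ⟨x₀, hx₀⟩
      omega
    · intro y hy
      rcases eq_or_ne y x₀ with rfl | hne
      · exact hx₀mem
      · exact hmemS y hy hne
end

section
/- Case d = 2: Let r ≥ 1 and let Γ ⊆ ℙⁿ be a finite set satisfying CB(r) with |Γ| ≤ 3r + 1. Then either Γ lies on a projective linear subspace of dimension at most 2, or Γ is contained in the union of two disjoint lines. -/
open MvPolynomial

namespace CB

variable {k : Type*} [Field k] {n : ℕ}

/-- The degree-1 polynomial associated to a linear functional. -/
noncomputable def linPoly (φ : Module.Dual k (Fin (n+1) → k)) :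
    MvPolynomial (Fin (n+1)) k :=
  ∑ i, C (φ (fun j => if i = j then 1 else 0)) * X i

lemma linPoly_homog (φ : Module.Dual k (Fin (n+1) → k)) :
    (linPoly φ).IsHomogeneous 1 := by
  apply MvPolynomial.IsHomogeneous.sum
  intro i _
  exact isHomogeneous_C_mul_X _ _

lemma eval_linPoly (φ : Module.Dual k (Fin (n+1) → k)) (v : Fin (n+1) → k) :
    eval v (linPoly φ) = φ v := by
  rw [LinearMap.pi_apply_eq_sum_univ φ v, linPoly]
  simp [mul_comm, smul_eq_mul]

/-- separation: a functional vanishing on `W` and not at `x ∉ W`. -/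
lemma exists_dual_sep {W : Submodule k (Fin (n+1) → k)} {x : Fin (n+1) → k}
    (hx : x ∉ W) :
    ∃ φ : Module.Dual k (Fin (n+1) → k), W ≤ LinearMap.ker φ ∧ φ x ≠ 0 := by
  obtain ⟨f, hfx, hf⟩ := W.exists_dual_map_eq_bot_of_notMem hx inferInstance
  refine ⟨f, ?_, hfx⟩
  intro w hw
  have : f w ∈ W.map f := Submodule.mem_map_of_mem hw
  rw [hf] at this
  simpa using this

/-- avoidance: a functional vanishing on `W` and nonzero at finitely many
vectors outside `W`. Needs `k` infinite. -/
lemma exists_dual_avoid [Infinite k] (W : Submodule k (Fin (n+1) → k))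
    (T : Finset (Fin (n+1) → k)) (hT : ∀ v ∈ T, v ∉ W) :
    ∃ φ : Module.Dual k (Fin (n+1) → k), W ≤ LinearMap.ker φ ∧ ∀ v ∈ T, φ v ≠ 0 := by
  classical
  induction T using Finset.induction_on with
  | empty => exact ⟨0, by simp, by simp⟩
  | @insert a s ha IH =>
    obtain ⟨φ, hφW, hφ⟩ := IH (fun v hv => hT v (Finset.mem_insert_of_mem hv))
    obtain ⟨ψ, hψW, hψa⟩ := exists_dual_sep (hT a (Finset.mem_insert_self a s))
    set B : Finset k := insert 0 ((insert a s).image (fun u => -φ u / ψ u)) with hB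
    obtain ⟨c, hc⟩ := Infinite.exists_notMem_finset B
    have hc0 : c ≠ 0 := fun h => hc (by simp [hB, h])
    refine ⟨φ + c • ψ, ?_, ?_⟩
    · intro w hw
      simp only [LinearMap.mem_ker, LinearMap.add_apply, LinearMap.smul_apply]
      rw [show φ w = 0 from hφW hw, show ψ w = 0 from hψW hw]
      simp
    · intro v hv
      simp only [LinearMap.add_apply, LinearMap.smul_apply, smul_eq_mul]
      intro hcontra
      by_cases hψv : ψ v = 0
      · rcases Finset.mem_insert.1 hv with rfl | hv
        · exact hψa hψv
        · exact hφ v hv (by simpa [hψv] using hcontra)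
      · apply hc
        have : c = -φ v / ψ v := by
          field_simp
          linear_combination hcontra
        rw [hB]
        exact Finset.mem_insert_of_mem (Finset.mem_image.2 ⟨v, hv, this.symm⟩)

end CB


namespace CB

variable {k : Type*} [Field k] {n : ℕ}

/-- distinct projective points: rep not in span of other rep. -/
lemma rep_notmem_span_singleton {x y : ProjSpace k n} (h : x ≠ y) :
    x.rep ∉ Submodule.span k {y.rep} := by
  intro hmem
  rw [Submodule.mem_span_singleton] at hmem
  obtain ⟨c, hc⟩ := hmem
  apply h
  have hc0 : c ≠ 0 := by
    rintro rfl
    exact x.rep_nonzero (by simpa using hc.symm)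
  have := Projectivization.mk_eq_mk_iff k x.rep y.rep x.rep_nonzero y.rep_nonzero
  rw [← Projectivization.mk_rep x, ← Projectivization.mk_rep y]
  rw [this]
  exact ⟨Units.mk0 c hc0, hc⟩

lemma rep_mem_span_pair_left (x y : ProjSpace k n) :
    x.rep ∈ Submodule.span k {x.rep, y.rep} :=
  Submodule.subset_span (by simp)

lemma rep_mem_span_pair_right (x y : ProjSpace k n) :
    y.rep ∈ Submodule.span k {x.rep, y.rep} :=
  Submodule.subset_span (by simp)

/-- exchange lemma. -/
lemma exchange {W : Submodule k (Fin (n+1) → k)} {u v : Fin (n+1) → k}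
    (h : u ∈ W ⊔ Submodule.span k {v}) (hu : u ∉ W) :
    v ∈ W ⊔ Submodule.span k {u} := by
  rw [Submodule.mem_sup] at h
  obtain ⟨w, hw, sv, hsv, huw⟩ := h
  rw [Submodule.mem_span_singleton] at hsv
  obtain ⟨c, rfl⟩ := hsv
  have hc : c ≠ 0 := by
    rintro rfl
    apply hu
    have : w = u := by simpa using huw
    exact this ▸ hw
  rw [Submodule.mem_sup]
  refine ⟨-(c⁻¹ • w), Submodule.neg_mem _ (Submodule.smul_mem _ _ hw), c⁻¹ • u,
    Submodule.mem_span_singleton.2 ⟨c⁻¹, rfl⟩, ?_⟩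
  rw [← huw]
  simp only [smul_add, smul_smul, inv_mul_cancel₀ hc, one_smul]
  abel

lemma span_pair_eq_sup (u v : Fin (n+1) → k) :
    Submodule.span k {u, v} = Submodule.span k {u} ⊔ Submodule.span k {v} := by
  rw [Submodule.span_insert]

/-- the span of the reps of two distinct points has finrank 2. -/
lemma finrank_span_pair {x y : ProjSpace k n} (h : x ≠ y) :
    Module.finrank k (Submodule.span k {x.rep, y.rep}) = 2 := by
  have h1 : Submodule.span k {x.rep} < Submodule.span k {x.rep, y.rep} := by
    apply lt_of_le_of_ne (Submodule.span_mono (by simp))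
    intro he
    exact rep_notmem_span_singleton (Ne.symm h) (he ▸ rep_mem_span_pair_right x y)
  have h2 := Submodule.finrank_lt_finrank_of_lt h1
  rw [finrank_span_singleton x.rep_nonzero] at h2
  have h3 : Module.finrank k (Submodule.span k {x.rep, y.rep}) ≤ 2 := by
    rw [span_pair_eq_sup]
    refine le_trans (Submodule.finrank_add_le_finrank_add_finrank _ _) ?_
    rw [finrank_span_singleton x.rep_nonzero, finrank_span_singleton y.rep_nonzero]
  omega

end CB


namespace CB

variable {k : Type*} [Field k] [Infinite k] {n : ℕ}

/-- Covering lemma: a CB(r) set can't have `Γ \ {x}` covered by ≤ r subspaces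
avoiding `x`. -/
lemma cover_contradiction {r m : ℕ} {Γ : Set (ProjSpace k n)} (hCB : IsCB r Γ)
    {x : ProjSpace k n} (hx : x ∈ Γ) (W : Fin m → Submodule k (Fin (n+1) → k))
    (hm : m ≤ r) (hW : ∀ i, x.rep ∉ W i)
    (hcov : ∀ y ∈ Γ, y ≠ x → ∃ i, y.rep ∈ W i) : False := by
  classical
  -- functionals
  choose φ hφker hφx using fun i => exists_dual_sep (hW i)
  obtain ⟨ψ, -, hψx⟩ := exists_dual_sep (W := (⊥ : Submodule k (Fin (n+1) → k)))
    (x := x.rep) (by simpa using x.rep_nonzero)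
  set F : MvPolynomial (Fin (n+1)) k :=
    (∏ i : Fin m, linPoly (φ i)) * (linPoly ψ) ^ (r - m) with hF
  have hhom : F.IsHomogeneous r := by
    have h1 : (∏ i : Fin m, linPoly (φ i)).IsHomogeneous m := by
      have := MvPolynomial.IsHomogeneous.prod Finset.univ
        (fun i : Fin m => linPoly (φ i)) (fun _ => 1)
        (fun i _ => linPoly_homog (φ i))
      simpa using this
    have h2 : ((linPoly ψ) ^ (r - m)).IsHomogeneous (r - m) := by
      simpa using (linPoly_homog ψ).pow (r - m)
    have := h1.mul h2
    rwa [Nat.add_sub_cancel' hm] at this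
  have hvan : ∀ y ∈ Γ, y ≠ x → eval y.rep F = 0 := by
    intro y hy hyx
    obtain ⟨i, hi⟩ := hcov y hy hyx
    rw [hF]
    rw [map_mul, map_prod]
    apply mul_eq_zero_of_left
    apply Finset.prod_eq_zero (Finset.mem_univ i)
    rw [eval_linPoly]
    exact hφker i hi
  have := hCB F hhom x hx hvan
  rw [hF, map_mul, map_prod, map_pow] at this
  simp only [eval_linPoly] at this
  rcases mul_eq_zero.1 this with h | h
  · obtain ⟨i, -, hi⟩ := Finset.prod_eq_zero_iff.1 h
    exact hφx i hi
  · exact hψx (pow_eq_zero_iff'.1 h).1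

/-- Removal lemma: removing the points on a subspace from a CB(r+1) set leaves
a CB(r) set. -/
lemma removal {r : ℕ} {Γ : Set (ProjSpace k n)} (hfin : Γ.Finite)
    (hCB : IsCB (r+1) Γ) (W : Submodule k (Fin (n+1) → k)) :
    IsCB r (Γ \ projSet W) := by
  classical
  set Γ' : Set (ProjSpace k n) := Γ \ projSet W with hΓ'
  have hfin' : Γ'.Finite := hfin.subset Set.diff_subset
  set T : Finset (Fin (n+1) → k) :=
    hfin'.toFinset.image (fun y => y.rep) with hT
  have hTW : ∀ v ∈ T, v ∉ W := by
    intro v hv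
    rw [hT, Finset.mem_image] at hv
    obtain ⟨y, hy, rfl⟩ := hv
    rw [Set.Finite.mem_toFinset] at hy
    exact hy.2
  obtain ⟨φ, hφker, hφT⟩ := exists_dual_avoid W T hTW
  intro G hG x hxΓ' hvan
  have hx : x ∈ Γ := hxΓ'.1
  set F := linPoly (n := n) φ * G with hF
  have hhom : F.IsHomogeneous (r+1) := by
    have h2 : F.IsHomogeneous (1+r) := (linPoly_homog φ).mul hG
    exact Nat.add_comm 1 r ▸ h2
  have hvanF : ∀ y ∈ Γ, y ≠ x → eval y.rep F = 0 := by
    intro y hy hyx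
    rw [hF, map_mul, eval_linPoly]
    by_cases hyW : y.rep ∈ W
    · rw [show φ y.rep = 0 from hφker hyW]; ring
    · have hyΓ' : y ∈ Γ' := ⟨hy, hyW⟩
      rw [hvan y hyΓ' hyx]; ring
  have := hCB F hhom x hx hvanF
  rw [hF, map_mul, eval_linPoly] at this
  have hφx : φ x.rep ≠ 0 := by
    apply hφT
    rw [hT, Finset.mem_image]
    exact ⟨x, (Set.Finite.mem_toFinset _).2 hxΓ', rfl⟩
  exact (mul_eq_zero.1 this).resolve_left hφx

/-- L1: a nonempty CB(r) set has at least r+2 points. -/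
lemma card_ge {r : ℕ} {Γ : Set (ProjSpace k n)} (hfin : Γ.Finite)
    (hCB : IsCB r Γ) (hne : Γ.Nonempty) : r + 2 ≤ Γ.ncard := by
  classical
  by_contra hlt
  push_neg at hlt
  obtain ⟨x, hx⟩ := hne
  have hfin' : (Γ \ {x}).Finite := hfin.subset Set.diff_subset
  set S : Finset (ProjSpace k n) := hfin'.toFinset with hS
  have hcardS : S.card ≤ r := by
    have h1 : (Γ \ {x}).ncard = Γ.ncard - 1 := by
      rw [Set.ncard_diff_singleton_of_mem hx]
    have h2 : (Γ \ {x}).ncard = S.card := Set.ncard_eq_toFinset_card _ hfin'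
    have h3 : 0 < Γ.ncard := (Set.ncard_pos hfin).2 ⟨x, hx⟩
    omega
  set e := S.equivFin with he
  apply cover_contradiction hCB hx
    (fun i : Fin S.card => Submodule.span k {(e.symm i : ProjSpace k n).rep})
    hcardS
  · intro i
    apply rep_notmem_span_singleton
    intro hxy
    have : (e.symm i : ProjSpace k n) ∈ Γ \ {x} := by
      have h2 := (e.symm i).2
      exact (Set.Finite.mem_toFinset hfin').1 h2
    exact this.2 hxy.symm
  · intro y hy hyx
    have hyS : y ∈ S := by
      rw [hS, Set.Finite.mem_toFinset]
      exact ⟨hy, hyx⟩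
    refine ⟨e ⟨y, hyS⟩, ?_⟩
    have : (e.symm (e ⟨y, hyS⟩) : ProjSpace k n) = y := by
      rw [Equiv.symm_apply_apply]
    rw [this]
    exact Submodule.mem_span_singleton_self _

/-- Lemma B: in a CB(r) set with r ≥ 1, each point is in the span of the others. -/
lemma rep_mem_span_others {r : ℕ} (hr : 1 ≤ r) {Γ : Set (ProjSpace k n)}
    (hCB : IsCB r Γ) {x : ProjSpace k n} (hx : x ∈ Γ) :
    x.rep ∈ Submodule.span k ((fun y : ProjSpace k n => y.rep) '' (Γ \ {x})) := by
  by_contra hnot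
  apply cover_contradiction hCB hx
    (fun _ : Fin 1 => Submodule.span k ((fun y : ProjSpace k n => y.rep) '' (Γ \ {x})))
    hr (fun _ => hnot)
  intro y hy hyx
  exact ⟨0, Submodule.subset_span ⟨y, ⟨hy, hyx⟩, rfl⟩⟩

end CB


namespace CB

variable {k : Type*} [Field k] [Infinite k] {n : ℕ}

lemma ncard_diff_eq {Γ : Set (ProjSpace k n)} (hfin : Γ.Finite)
    (W : Submodule k (Fin (n+1) → k)) :
    (Γ \ projSet W).ncard = Γ.ncard - (Γ ∩ projSet W).ncard := by
  have := Set.ncard_inter_add_ncard_diff_eq_ncard Γ (projSet W) hfin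
  omega

lemma ncard_eq_diff_add {Γ : Set (ProjSpace k n)} (hfin : Γ.Finite)
    (W : Submodule k (Fin (n+1) → k)) :
    Γ.ncard = (Γ ∩ projSet W).ncard + (Γ \ projSet W).ncard :=
  (Set.ncard_inter_add_ncard_diff_eq_ncard Γ (projSet W) hfin).symm

/-- existence of a line through the most points of `Γ`. -/
lemma exists_max_line {Γ : Set (ProjSpace k n)} (hfin : Γ.Finite)
    {x y : ProjSpace k n} (hx : x ∈ Γ) (hy : y ∈ Γ) (hxy : x ≠ y) :
    ∃ ℓ : Submodule k (Fin (n+1) → k), Module.finrank k ℓ = 2 ∧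
      2 ≤ (Γ ∩ projSet ℓ).ncard ∧
      ∀ W : Submodule k (Fin (n+1) → k), Module.finrank k W ≤ 2 →
        (Γ ∩ projSet W).ncard ≤ (Γ ∩ projSet ℓ).ncard := by
  classical
  set L : Finset (Submodule k (Fin (n+1) → k)) :=
    ((hfin.toFinset ×ˢ hfin.toFinset).filter (fun p => p.1 ≠ p.2)).image
      (fun p => Submodule.span k {p.1.rep, p.2.rep}) with hL
  have hmemL : ∀ {a b : ProjSpace k n}, a ∈ Γ → b ∈ Γ → a ≠ b →
      Submodule.span k {a.rep, b.rep} ∈ L := by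
    intro a b ha hb hab
    rw [hL, Finset.mem_image]
    exact ⟨(a, b), Finset.mem_filter.2 ⟨Finset.mem_product.2
      ⟨hfin.mem_toFinset.2 ha, hfin.mem_toFinset.2 hb⟩, hab⟩, rfl⟩
  have hLne : L.Nonempty := ⟨_, hmemL hx hy hxy⟩
  obtain ⟨ℓ, hℓL, hmax⟩ := L.exists_max_image
    (fun W => (Γ ∩ projSet W).ncard) hLne
  -- ℓ is a span of two distinct points of Γ
  rw [hL, Finset.mem_image] at hℓL
  obtain ⟨⟨a, b⟩, hab, rfl⟩ := hℓL
  rw [Finset.mem_filter, Finset.mem_product] at hab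
  obtain ⟨⟨haΓ, hbΓ⟩, hne2⟩ := hab
  rw [hfin.mem_toFinset] at haΓ hbΓ
  have hfr : Module.finrank k (Submodule.span k {a.rep, b.rep}) = 2 :=
    finrank_span_pair hne2
  refine ⟨_, hfr, ?_, ?_⟩
  · have hsub : {a, b} ⊆ Γ ∩ projSet (Submodule.span k {a.rep, b.rep}) := by
      rintro z (rfl | rfl)
      · exact ⟨haΓ, rep_mem_span_pair_left _ _⟩
      · exact ⟨hbΓ, rep_mem_span_pair_right _ _⟩
    calc 2 = ({a, b} : Set (ProjSpace k n)).ncard := (Set.ncard_pair hne2).symm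
    _ ≤ _ := Set.ncard_le_ncard hsub ((hfin.inter_of_left _))
  · intro W hW
    by_cases h2 : 1 < (Γ ∩ projSet W).ncard
    · rw [Set.one_lt_ncard_iff (hfin.inter_of_left _)] at h2
      obtain ⟨u, v, hu, hv, huv⟩ := h2
      have hle : Submodule.span k {u.rep, v.rep} ≤ W := by
        rw [Submodule.span_le]
        rintro z (rfl | rfl)
        · exact hu.2
        · exact hv.2
      have heq : Submodule.span k {u.rep, v.rep} = W :=
        Submodule.eq_of_le_of_finrank_le hle (by rw [finrank_span_pair huv]; exact hW)
      rw [← heq]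
      exact hmax _ (hmemL hu.1 hv.1 huv)
    · push_neg at h2
      have : 2 ≤ (Γ ∩ projSet (Submodule.span k {a.rep, b.rep})).ncard := by
        have hsub : {a, b} ⊆ Γ ∩ projSet (Submodule.span k {a.rep, b.rep}) := by
          rintro z (rfl | rfl)
          · exact ⟨haΓ, rep_mem_span_pair_left _ _⟩
          · exact ⟨hbΓ, rep_mem_span_pair_right _ _⟩
        calc 2 = ({a, b} : Set (ProjSpace k n)).ncard := (Set.ncard_pair hne2).symm
        _ ≤ _ := Set.ncard_le_ncard hsub ((hfin.inter_of_left _))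
      omega

/-- trivial collinearity for small sets -/
lemma collinear_of_card_le_one {Γ : Set (ProjSpace k n)} (hfin : Γ.Finite)
    (h : Γ.ncard ≤ 1) :
    ∃ W : Submodule k (Fin (n+1) → k), Module.finrank k W ≤ 2 ∧ Γ ⊆ projSet W := by
  rcases Set.eq_empty_or_nonempty Γ with rfl | ⟨x, hx⟩
  · exact ⟨⊥, by simp, by simp⟩
  · refine ⟨Submodule.span k {x.rep}, ?_, ?_⟩
    · rw [finrank_span_singleton x.rep_nonzero]; omega
    · intro y hy
      have : y = x := by
        by_contra hne
        have : 1 < Γ.ncard := Set.one_lt_ncard_iff hfin |>.2 ⟨y, x, hy, hx, hne⟩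
        omega
      rw [this]
      exact Submodule.mem_span_singleton_self _

/-- L2: a CB(m) set with at most 2m+1 points is collinear. -/
lemma collinear_of_card_le (m : ℕ) :
    ∀ Γ : Set (ProjSpace k n), Γ.Finite → IsCB m Γ → Γ.ncard ≤ 2*m+1 →
    ∃ W : Submodule k (Fin (n+1) → k), Module.finrank k W ≤ 2 ∧ Γ ⊆ projSet W := by
  induction m with
  | zero => intro Γ hfin _ hcard; exact collinear_of_card_le_one hfin (by omega)
  | succ m IH =>
    intro Γ hfin hCB hcard
    by_cases hsmall : Γ.ncard ≤ 1
    · exact collinear_of_card_le_one hfin hsmall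
    push_neg at hsmall
    obtain ⟨x, y, hx, hy, hxy⟩ := (Set.one_lt_ncard_iff hfin).1 hsmall
    obtain ⟨ℓ, hℓrk, hℓ2, hℓmax⟩ := exists_max_line hfin hx hy hxy
    by_cases hΓℓ : Γ ⊆ projSet ℓ
    · exact ⟨ℓ, by omega, hΓℓ⟩
    · exfalso
      set Γ' := Γ \ projSet ℓ with hΓ'
      have hΓ'ne : Γ'.Nonempty := Set.diff_nonempty.2 hΓℓ
      have hΓ'fin : Γ'.Finite := hfin.subset Set.diff_subset
      have hΓ'CB : IsCB m Γ' := removal hfin hCB ℓ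
      have hΓ'card : Γ'.ncard = Γ.ncard - (Γ ∩ projSet ℓ).ncard := ncard_diff_eq hfin ℓ
      have hge : m + 2 ≤ Γ'.ncard := card_ge hΓ'fin hΓ'CB hΓ'ne
      obtain ⟨lam0, hlamrk, hGlam⟩ := IH Γ' hΓ'fin hΓ'CB (by omega)
      have hsub : Γ' ⊆ Γ ∩ projSet lam0 := fun z hz => ⟨hz.1, hGlam hz⟩
      have h1 : Γ'.ncard ≤ (Γ ∩ projSet lam0).ncard :=
        Set.ncard_le_ncard hsub (hfin.inter_of_left _)
      have h2 := hℓmax lam0 hlamrk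
      omega

end CB


namespace CB

/-- Matching lemma: a finite set of size ≤ 2m whose fibers under `f` have size ≤ m
can be covered by ≤ m "pairs", each pair either degenerate or with distinct
`f`-values. -/
lemma matching {α β : Type*} [DecidableEq α] [DecidableEq β] (m : ℕ) :
    ∀ (S : Finset α) (f : α → β),
    (∀ a ∈ S, (S.filter (fun z => f z = f a)).card ≤ m) → S.card ≤ 2*m →
    ∃ l : List (α × α), l.length ≤ m ∧
      (∀ p ∈ l, p.1 ∈ S ∧ p.2 ∈ S ∧ (p.1 = p.2 ∨ f p.1 ≠ f p.2)) ∧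
      (∀ a ∈ S, ∃ p ∈ l, a = p.1 ∨ a = p.2) := by
  induction m with
  | zero =>
    intro S f _ hcard
    have : S = ∅ := Finset.card_eq_zero.1 (by omega)
    subst this
    exact ⟨[], by simp, by simp, by simp⟩
  | succ m IH =>
    intro S f hfib hcard
    by_cases hsmall : S.card ≤ m + 1
    · refine ⟨S.toList.map (fun a => (a, a)), by simpa using hsmall, ?_, ?_⟩
      · intro p hp
        rw [List.mem_map] at hp
        obtain ⟨a, ha, rfl⟩ := hp
        rw [Finset.mem_toList] at ha
        exact ⟨ha, ha, Or.inl rfl⟩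
      · intro a ha
        exact ⟨(a, a), List.mem_map.2 ⟨a, Finset.mem_toList.2 ha, rfl⟩, Or.inl rfl⟩
    · push_neg at hsmall
      have hSne : S.Nonempty := Finset.card_pos.1 (by omega)
      obtain ⟨a₀, ha₀S, ha₀max⟩ := S.exists_max_image
        (fun a => (S.filter (fun z => f z = f a)).card) hSne
      set A := S.filter (fun z => f z = f a₀) with hA
      have hAsub : A ⊆ S := Finset.filter_subset _ _
      have hAcard : A.card ≤ m + 1 := hfib a₀ ha₀S
      have hS₂ne : (S \ A).Nonempty := by
        rw [← Finset.card_pos, Finset.card_sdiff_of_subset hAsub]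
        omega
      obtain ⟨b₀, hb₀S₂, hb₀max⟩ := (S \ A).exists_max_image
        (fun a => (S.filter (fun z => f z = f a)).card) hS₂ne
      have hb₀S : b₀ ∈ S := (Finset.mem_sdiff.1 hb₀S₂).1
      have hb₀f : f b₀ ≠ f a₀ := by
        have := (Finset.mem_sdiff.1 hb₀S₂).2
        rw [hA, Finset.mem_filter] at this
        tauto
      have hab : a₀ ≠ b₀ := fun h => hb₀f (by rw [h])
      set S' := (S.erase a₀).erase b₀ with hS'
      have hS'sub : S' ⊆ S := ((S.erase a₀).erase_subset b₀).trans (S.erase_subset a₀)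
      have hb₀e : b₀ ∈ S.erase a₀ := Finset.mem_erase.2 ⟨Ne.symm hab, hb₀S⟩
      have hS'card : S'.card = S.card - 2 := by
        rw [hS', Finset.card_erase_of_mem hb₀e, Finset.card_erase_of_mem ha₀S]
        omega
      have hfib' : ∀ a ∈ S', (S'.filter (fun z => f z = f a)).card ≤ m := by
        intro a haS'
        have haS : a ∈ S := hS'sub haS'
        by_cases h1 : f a = f a₀
        · have hsub2 : S'.filter (fun z => f z = f a) ⊆ A.erase a₀ := by
            intro z hz
            rw [Finset.mem_filter] at hz
            refine Finset.mem_erase.2 ⟨?_, ?_⟩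
            · intro heq; subst heq
              exact (Finset.mem_erase.1 (Finset.mem_of_mem_erase (hS' ▸ hz.1))).1 rfl
            · rw [hA, Finset.mem_filter]
              exact ⟨hS'sub hz.1, by rw [hz.2, h1]⟩
          calc (S'.filter (fun z => f z = f a)).card ≤ (A.erase a₀).card :=
                Finset.card_le_card hsub2
          _ ≤ m := by
              rw [Finset.card_erase_of_mem (by rw [hA, Finset.mem_filter]; exact ⟨ha₀S, rfl⟩)]
              omega
        · -- f a ≠ f a₀, so a ∈ S \ A
          have haS₂ : a ∈ S \ A := by
            rw [Finset.mem_sdiff, hA, Finset.mem_filter]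
            exact ⟨haS, by tauto⟩
          by_cases h2 : f a = f b₀
          · have hsub2 : S'.filter (fun z => f z = f a) ⊆
                (S.filter (fun z => f z = f b₀)).erase b₀ := by
              intro z hz
              rw [Finset.mem_filter] at hz
              refine Finset.mem_erase.2 ⟨?_, ?_⟩
              · intro heq; subst heq
                exact (Finset.mem_erase.1 (hS' ▸ hz.1)).1 rfl
              · exact Finset.mem_filter.2 ⟨hS'sub hz.1, by rw [hz.2, h2]⟩
            have hb₀fib : (S.filter (fun z => f z = f b₀)).card ≤ m + 1 := hfib b₀ hb₀S
            calc (S'.filter (fun z => f z = f a)).card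
                ≤ ((S.filter (fun z => f z = f b₀)).erase b₀).card :=
                Finset.card_le_card hsub2
            _ ≤ m := by
                rw [Finset.card_erase_of_mem
                  (show b₀ ∈ S.filter (fun z => f z = f b₀) from
                    Finset.mem_filter.2 ⟨hb₀S, rfl⟩)]
                omega
          · -- third fiber
            by_contra hcon
            push_neg at hcon
            have hfibS : m + 1 ≤ (S.filter (fun z => f z = f a)).card := by
              have : S'.filter (fun z => f z = f a) ⊆ S.filter (fun z => f z = f a) :=
                Finset.filter_subset_filter _ hS'sub
              have := Finset.card_le_card this
              omega
            have hb₀fib : m + 1 ≤ (S.filter (fun z => f z = f b₀)).card :=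
              le_trans hfibS (hb₀max a haS₂)
            have ha₀fib : m + 1 ≤ (S.filter (fun z => f z = f a₀)).card :=
              le_trans hb₀fib (ha₀max b₀ hb₀S)
            -- three disjoint fibers, each of size ≥ m+1, inside S of size ≤ 2m+2
            have hdis1 : Disjoint (S.filter (fun z => f z = f a₀))
                (S.filter (fun z => f z = f b₀)) := by
              rw [Finset.disjoint_filter]
              intro z _ hz1 hz2
              exact hb₀f (by rw [← hz2, ← hz1])
            have hdis2 : Disjoint
                ((S.filter (fun z => f z = f a₀)) ∪ (S.filter (fun z => f z = f b₀)))
                (S.filter (fun z => f z = f a)) := by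
              rw [Finset.disjoint_union_left]
              constructor
              · rw [Finset.disjoint_filter]
                intro z _ hz1 hz2
                exact h1 (by rw [← hz2, ← hz1])
              · rw [Finset.disjoint_filter]
                intro z _ hz1 hz2
                exact h2 (by rw [← hz2, ← hz1])
            have hunion : ((S.filter (fun z => f z = f a₀)) ∪
                (S.filter (fun z => f z = f b₀)) ∪ (S.filter (fun z => f z = f a))) ⊆ S := by
              intro z hz
              rcases Finset.mem_union.1 hz with hz | hz
              · rcases Finset.mem_union.1 hz with hz | hz <;>
                  exact (Finset.mem_filter.1 hz).1
              · exact (Finset.mem_filter.1 hz).1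
            have hcard3 := Finset.card_le_card hunion
            rw [Finset.card_union_of_disjoint hdis2, Finset.card_union_of_disjoint hdis1]
              at hcard3
            omega
      obtain ⟨l', hl'len, hl'mem, hl'cov⟩ := IH S' f hfib' (by omega)
      refine ⟨(a₀, b₀) :: l', by simpa using hl'len, ?_, ?_⟩
      · intro p hp0
        rcases List.mem_cons.1 hp0 with rfl | hp
        · exact ⟨ha₀S, hb₀S, Or.inr (Ne.symm hb₀f)⟩
        · obtain ⟨h1, h2, h3⟩ := hl'mem p hp
          exact ⟨hS'sub h1, hS'sub h2, h3⟩
      · intro a ha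
        by_cases h1 : a = a₀
        · exact ⟨(a₀, b₀), List.mem_cons_self, Or.inl h1⟩
        by_cases h2 : a = b₀
        · exact ⟨(a₀, b₀), List.mem_cons_self, Or.inr h2⟩
        · have : a ∈ S' := by
            rw [hS']
            exact Finset.mem_erase.2 ⟨h2, Finset.mem_erase.2 ⟨h1, ha⟩⟩
          obtain ⟨p, hp, hap⟩ := hl'cov a this
          exact ⟨p, List.mem_cons_of_mem _ hp, hap⟩

end CB


namespace CB

variable {k : Type*} [Field k] [Infinite k] {n : ℕ}

/-- List version of the covering lemma. -/
lemma cover_contradiction_list {r : ℕ} {Γ : Set (ProjSpace k n)} (hCB : IsCB r Γ)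
    {x : ProjSpace k n} (hx : x ∈ Γ) (l : List (Submodule k (Fin (n+1) → k)))
    (hlen : l.length ≤ r) (hW : ∀ w ∈ l, x.rep ∉ w)
    (hcov : ∀ y ∈ Γ, y ≠ x → ∃ w ∈ l, y.rep ∈ w) : False := by
  apply cover_contradiction hCB hx (fun i : Fin l.length => l.get i) hlen
  · intro i
    exact hW _ (List.get_mem l i)
  · intro y hy hyx
    obtain ⟨w, hwl, hyw⟩ := hcov y hy hyx
    obtain ⟨i, rfl⟩ := List.mem_iff_get.1 hwl
    exact ⟨i, hyw⟩

lemma three_distinct {S : Set (ProjSpace k n)} (hfin : S.Finite) (h : 3 ≤ S.ncard) :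
    ∃ a b c : ProjSpace k n, a ∈ S ∧ b ∈ S ∧ c ∈ S ∧ a ≠ b ∧ a ≠ c ∧ b ≠ c := by
  rw [Set.ncard_eq_toFinset_card _ hfin] at h
  obtain ⟨a, b, c, ha, hb, hc, h1, h2, h3⟩ := (Finset.two_lt_card_iff (s := hfin.toFinset)).1 (by omega)
  rw [hfin.mem_toFinset] at ha hb hc
  exact ⟨a, b, c, ha, hb, hc, h1, h2, h3⟩

/-- if `x ∉ {a, b}` as projective points and `span{x,a} ≠ span{x,b}` (when `a ≠ b`),
then `x.rep ∉ span {a.rep, b.rep}`. -/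
lemma notmem_span_pair {x a b : ProjSpace k n} (hxa : x ≠ a) (hxb : x ≠ b)
    (hf : a = b ∨ Submodule.span k {x.rep, a.rep} ≠ Submodule.span k {x.rep, b.rep}) :
    x.rep ∉ Submodule.span k {a.rep, b.rep} := by
  rcases hf with rfl | hf
  · intro hmem
    have : ({a.rep, a.rep} : Set (Fin (n+1) → k)) = {a.rep} := by simp
    rw [this] at hmem
    exact rep_notmem_span_singleton hxa hmem
  · intro hmem
    apply hf
    rw [span_pair_eq_sup a.rep b.rep] at hmem
    have hxa' : x.rep ∉ Submodule.span k {a.rep} := rep_notmem_span_singleton hxa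
    -- x ∈ span{a} ⊔ span{b}, so by exchange b ∈ span{a} ⊔ span{x}
    have hmem' : x.rep ∈ Submodule.span k {a.rep} ⊔ Submodule.span k {b.rep} := hmem
    have hb' : b.rep ∈ Submodule.span k {a.rep} ⊔ Submodule.span k {x.rep} :=
      exchange hmem' hxa'
    have hab : a ≠ b := by
      rintro rfl
      apply hxa'
      have : ({a.rep} : Set (Fin (n+1) → k)) ⊆ (Submodule.span k {a.rep} : Set _) :=
        Submodule.subset_span
      rcases Submodule.mem_sup.1 hmem' with ⟨u, hu, v, hv, huv⟩
      rw [← huv]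
      exact Submodule.add_mem _ hu hv
    have hle : Submodule.span k {x.rep, b.rep} ≤ Submodule.span k {x.rep, a.rep} := by
      rw [Submodule.span_le]
      rintro z (rfl | rfl)
      · exact rep_mem_span_pair_left x a
      · rw [span_pair_eq_sup x.rep a.rep, sup_comm]
        exact hb'
    exact (Submodule.eq_of_le_of_finrank_le hle
      (by rw [finrank_span_pair hxa, finrank_span_pair hxb])).symm

/-- Exchange for `x ∈ W ⊔ span{z}`-type covers. -/
lemma notmem_sup_span {W : Submodule k (Fin (n+1) → k)} {x z : ProjSpace k n}
    (hxW : x.rep ∉ W) (hz : z.rep ∉ W ⊔ Submodule.span k {x.rep}) :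
    x.rep ∉ W ⊔ Submodule.span k {z.rep} := by
  intro hmem
  exact hz (exchange hmem hxW)

lemma finrank_sup_le (A B : Submodule k (Fin (n+1) → k)) :
    Module.finrank k ↥(A ⊔ B) ≤ Module.finrank k A + Module.finrank k B :=
  Submodule.finrank_add_le_finrank_add_finrank A B

/-- the list of singleton-span covers of a finite set of points. -/
noncomputable def singles (T : Set (ProjSpace k n)) (hT : T.Finite) :
    List (Submodule k (Fin (n+1) → k)) :=
  hT.toFinset.toList.map (fun z => Submodule.span k {z.rep})

lemma singles_length {T : Set (ProjSpace k n)} (hT : T.Finite) :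
    (singles T hT).length = T.ncard := by
  rw [singles, List.length_map, Finset.length_toList, Set.ncard_eq_toFinset_card _ hT]

lemma singles_notmem {T : Set (ProjSpace k n)} (hT : T.Finite) {x : ProjSpace k n}
    (hx : x ∉ T) : ∀ w ∈ singles T hT, x.rep ∉ w := by
  intro w hw
  rw [singles, List.mem_map] at hw
  obtain ⟨z, hz, rfl⟩ := hw
  rw [Finset.mem_toList, hT.mem_toFinset] at hz
  exact rep_notmem_span_singleton (fun h => hx (h ▸ hz))

lemma singles_cover {T : Set (ProjSpace k n)} (hT : T.Finite) {y : ProjSpace k n}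
    (hy : y ∈ T) : ∃ w ∈ singles T hT, y.rep ∈ w :=
  ⟨Submodule.span k {y.rep}, List.mem_map.2 ⟨y, Finset.mem_toList.2 (hT.mem_toFinset.2 hy), rfl⟩,
    Submodule.mem_span_singleton_self _⟩

end CB


namespace CB

variable {k : Type*} [Field k] [Infinite k] {n : ℕ}

lemma finrank_span_reps_le {S : Set (ProjSpace k n)} (hfin : S.Finite) :
    Module.finrank k (Submodule.span k ((fun y : ProjSpace k n => y.rep) '' S)) ≤ S.ncard := by
  classical
  letI := (hfin.image (fun y : ProjSpace k n => y.rep)).fintype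
  have h3 := finrank_span_le_card (R := k) ((fun y : ProjSpace k n => y.rep) '' S)
  have h4 : ((fun y : ProjSpace k n => y.rep) '' S).toFinset.card
      = ((fun y : ProjSpace k n => y.rep) '' S).ncard :=
    (Set.ncard_eq_toFinset_card' _).symm
  have h5 : ((fun y : ProjSpace k n => y.rep) '' S).ncard ≤ S.ncard :=
    Set.ncard_image_le hfin
  omega

lemma finrank_span_triple_le (u v w : ProjSpace k n) :
    Module.finrank k (Submodule.span k {u.rep, v.rep, w.rep}) ≤ 3 := by
  rw [Submodule.span_insert, Submodule.span_insert]
  have h1 := finrank_sup_le (Submodule.span k {u.rep})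
    (Submodule.span k {v.rep} ⊔ Submodule.span k {w.rep})
  have h2 := finrank_sup_le (Submodule.span k {v.rep}) (Submodule.span k {w.rep})
  rw [finrank_span_singleton u.rep_nonzero] at h1
  rw [finrank_span_singleton v.rep_nonzero, finrank_span_singleton w.rep_nonzero] at h2
  omega

theorem main (r : ℕ) : ∀ (_ : 1 ≤ r) (Γ : Set (ProjSpace k n)), Γ.Finite → IsCB r Γ →
    Γ.ncard ≤ 3*r+1 →
    (∃ W : Submodule k (Fin (n+1) → k), Module.finrank k W ≤ 3 ∧ Γ ⊆ projSet W) ∨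
    (∃ L₁ L₂ : Submodule k (Fin (n+1) → k), Module.finrank k L₁ ≤ 2 ∧
      Module.finrank k L₂ ≤ 2 ∧ Γ ⊆ projSet L₁ ∪ projSet L₂) := by
  induction r using Nat.strong_induction_on with
  | _ r IH =>
  intro hr Γ hfin hCB hcard
  classical
  by_contra hcon
  have hplane : ∀ W : Submodule k (Fin (n+1) → k), Module.finrank k W ≤ 3 →
      ¬ Γ ⊆ projSet W :=
    fun W hW hsub => hcon (Or.inl ⟨W, hW, hsub⟩)
  have hlines : ∀ L₁ L₂ : Submodule k (Fin (n+1) → k), Module.finrank k L₁ ≤ 2 →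
      Module.finrank k L₂ ≤ 2 → ¬ Γ ⊆ projSet L₁ ∪ projSet L₂ :=
    fun L₁ L₂ h1 h2 hsub => hcon (Or.inr ⟨L₁, L₂, h1, h2, hsub⟩)
  have hne : Γ.Nonempty := by
    rcases Set.eq_empty_or_nonempty Γ with rfl | h
    · exact absurd (Set.empty_subset _) (hplane ⊥ (by simp))
    · exact h
  have hge : r + 2 ≤ Γ.ncard := card_ge hfin hCB hne
  -- base case r = 1
  rcases Nat.lt_or_ge r 2 with hr1 | hr2
  · have hr1' : r = 1 := by omega
    subst hr1'
    obtain ⟨x, hx⟩ := hne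
    have hfinD : (Γ \ {x}).Finite := hfin.subset Set.diff_subset
    apply hplane (Submodule.span k ((fun y : ProjSpace k n => y.rep) '' (Γ \ {x})))
    · have h1 := finrank_span_reps_le hfinD
      have h2 : (Γ \ {x}).ncard = Γ.ncard - 1 := Set.ncard_diff_singleton_of_mem hx
      omega
    · intro y hy
      by_cases hyx : y = x
      · subst hyx
        exact rep_mem_span_others le_rfl hCB hy
      · exact Submodule.subset_span ⟨y, ⟨hy, hyx⟩, rfl⟩
  -- now r ≥ 2
  have hrw : r - 1 + 1 = r := by omega
  have hCB' : IsCB (r-1+1) Γ := by rw [hrw]; exact hCB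
  have key : ∀ (Δ : Set (ProjSpace k n)) (m : ℕ), Δ.Finite → IsCB (m+1) Δ →
      ∀ W : Submodule k (Fin (n+1) → k), ¬ Δ ⊆ projSet W →
      IsCB m (Δ \ projSet W) ∧ (Δ \ projSet W).Nonempty ∧
        m + 2 ≤ (Δ \ projSet W).ncard := by
    intro Δ m hΔfin hΔCB W hsub
    have h1 : IsCB m (Δ \ projSet W) := removal hΔfin hΔCB W
    have h2 : (Δ \ projSet W).Nonempty := Set.diff_nonempty.2 hsub
    exact ⟨h1, h2, card_ge (hΔfin.subset Set.diff_subset) h1 h2⟩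
  -- maximal line
  obtain ⟨x0, y0, hx0, hy0, hxy0⟩ := (Set.one_lt_ncard_iff hfin).1 (by omega)
  obtain ⟨ℓ, hℓrk, hℓ2, hℓmax⟩ := exists_max_line hfin hx0 hy0 hxy0
  set t := (Γ ∩ projSet ℓ).ncard with ht
  have hnotℓ : ¬ Γ ⊆ projSet ℓ := hplane ℓ (by omega)
  obtain ⟨hΓ'CB, hΓ'ne, hΓ'ge⟩ := key Γ (r-1) hfin hCB' ℓ hnotℓ
  set Γ' := Γ \ projSet ℓ with hΓ'def
  have hΓ'fin : Γ'.Finite := hfin.subset Set.diff_subset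
  have hsplit : Γ.ncard = t + Γ'.ncard := ncard_eq_diff_add hfin ℓ
  have hΓ'notline : ∀ W : Submodule k (Fin (n+1) → k), Module.finrank k W ≤ 2 →
      ¬ Γ' ⊆ projSet W := by
    intro W hW hsub
    apply hlines ℓ W (by omega) hW
    intro y hy
    by_cases h : y.rep ∈ ℓ
    · exact Or.inl h
    · exact Or.inr (hsub ⟨hy, h⟩)
  have hΓ'2r : 2*r ≤ Γ'.ncard := by
    by_contra hlt
    push_neg at hlt
    obtain ⟨W, hWrk, hWsub⟩ := collinear_of_card_le (r-1) Γ' hΓ'fin hΓ'CB (by omega)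
    exact hΓ'notline W hWrk hWsub
  have htle : t ≤ r + 1 := by omega
  -- case A : Γ' contained in a plane is impossible
  have caseA : ∀ P : Submodule k (Fin (n+1) → k), Module.finrank k P ≤ 3 →
      Γ' ⊆ projSet P → False := by
    intro P hPrk hΓ'P
    obtain ⟨hΔCB, hΔne, hΔge⟩ := key Γ (r-1) hfin hCB' P (hplane P hPrk)
    have hΔsub : Γ \ projSet P ⊆ Γ ∩ projSet ℓ := by
      intro z hz
      refine ⟨hz.1, ?_⟩
      by_contra hzℓ
      exact hz.2 (hΓ'P ⟨hz.1, hzℓ⟩)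
    have htger : r + 1 ≤ t := by
      have := Set.ncard_le_ncard hΔsub (hfin.inter_of_left _)
      omega
    have hΓ'le : Γ'.ncard ≤ 2*r := by omega
    obtain ⟨x, hx⟩ := hΓ'ne
    have hxΓ : x ∈ Γ := hx.1
    have hxℓ : x.rep ∉ ℓ := hx.2
    have hRx : ¬ Γ' ⊆ projSet (ℓ ⊔ Submodule.span k {x.rep}) := by
      intro hsub
      apply hplane (ℓ ⊔ Submodule.span k {x.rep})
      · have h1 := finrank_sup_le ℓ (Submodule.span k {x.rep})
        rw [finrank_span_singleton x.rep_nonzero] at h1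
        omega
      · intro y hy
        by_cases h : y.rep ∈ ℓ
        · exact Submodule.mem_sup_left h
        · exact hsub ⟨hy, h⟩
    obtain ⟨y₀, hy₀Γ', hy₀W⟩ := Set.not_subset.1 hRx
    have hxy₀ : x ≠ y₀ := by
      rintro rfl
      exact hy₀W (Submodule.mem_sup_right (Submodule.mem_span_singleton_self _))
    have hxW₁ : x.rep ∉ ℓ ⊔ Submodule.span k {y₀.rep} := notmem_sup_span hxℓ hy₀W
    -- line bound within Γ'
    have hlineΓ' : ∀ z : ProjSpace k n, z ≠ x →
        (Γ' ∩ projSet (Submodule.span k {x.rep, z.rep})).ncard ≤ r := by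
      intro z hzx
      have hfr : Module.finrank k (Submodule.span k {x.rep, z.rep}) = 2 :=
        finrank_span_pair (Ne.symm hzx)
      have hCB'' : IsCB (r-2+1) Γ' := by
        rw [show r-2+1 = r-1 from by omega]; exact hΓ'CB
      obtain ⟨h1, h2, h3⟩ := key Γ' (r-2) hΓ'fin hCB''
        (Submodule.span k {x.rep, z.rep}) (hΓ'notline _ (le_of_eq hfr))
      have h4 := ncard_eq_diff_add hΓ'fin (Submodule.span k {x.rep, z.rep})
      omega
    -- the Finset S and the matching
    have hSsub : ({x, y₀} : Set (ProjSpace k n)) ⊆ Γ' := by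
      rintro z (rfl | rfl)
      exacts [hx, hy₀Γ']
    have hSfin : (Γ' \ ({x, y₀} : Set (ProjSpace k n))).Finite := hΓ'fin.subset Set.diff_subset
    have hScard : (Γ' \ ({x, y₀} : Set (ProjSpace k n))).ncard = Γ'.ncard - 2 := by
      rw [Set.ncard_diff hSsub, Set.ncard_pair hxy₀]
    set S : Finset (ProjSpace k n) := hSfin.toFinset with hSdef
    have hScard' : S.card = Γ'.ncard - 2 := by
      rw [hSdef, ← Set.ncard_eq_toFinset_card _ hSfin]
      exact hScard
    set f : ProjSpace k n → Submodule k (Fin (n+1) → k) :=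
      fun z => Submodule.span k {x.rep, z.rep} with hf
    have hmemS : ∀ {z : ProjSpace k n}, z ∈ S → z ∈ Γ' ∧ z ≠ x ∧ z ≠ y₀ := by
      intro z hz
      rw [hSdef, hSfin.mem_toFinset] at hz
      refine ⟨hz.1, ?_, ?_⟩
      · intro h; exact hz.2 (by rw [h]; exact Or.inl rfl)
      · intro h; exact hz.2 (by rw [h]; exact Or.inr rfl)
    have hfib : ∀ a ∈ S, (S.filter (fun z => f z = f a)).card ≤ r - 1 := by
      intro a haS
      obtain ⟨haΓ', hax, -⟩ := hmemS haS
      have hsub2 : ↑(S.filter (fun z => f z = f a)) ⊆ (Γ' ∩ projSet (f a)) \ {x} := by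
        intro z hz
        rw [Finset.coe_filter, Set.mem_setOf_eq] at hz
        obtain ⟨hzS, hzf⟩ := hz
        obtain ⟨hzΓ', hzx, -⟩ := hmemS hzS
        refine ⟨⟨hzΓ', ?_⟩, hzx⟩
        rw [← hzf]
        exact rep_mem_span_pair_right x z
      have hcard2 := Set.ncard_le_ncard hsub2 ((hΓ'fin.inter_of_left _).diff)
      rw [Set.ncard_coe_finset] at hcard2
      have hxmem : x ∈ Γ' ∩ projSet (f a) := ⟨hx, rep_mem_span_pair_left x a⟩
      have h5 := Set.ncard_diff_singleton_of_mem hxmem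
      have hbound : (Γ' ∩ projSet (f a)).ncard ≤ r := hlineΓ' a hax
      omega
    obtain ⟨l, hlen, hlmem, hlcov⟩ := matching (r-1) S f hfib (by omega)
    set covs := (ℓ ⊔ Submodule.span k {y₀.rep}) ::
      l.map (fun p => Submodule.span k {p.1.rep, p.2.rep}) with hcovs
    apply cover_contradiction_list hCB hxΓ covs
    · rw [hcovs]
      simp only [List.length_cons, List.length_map]
      omega
    · intro w hw
      rcases List.mem_cons.1 hw with rfl | hw
      · exact hxW₁
      · rw [List.mem_map] at hw
        obtain ⟨p, hpl, rfl⟩ := hw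
        obtain ⟨hp1, hp2, hp3⟩ := hlmem p hpl
        obtain ⟨-, hp1x, -⟩ := hmemS hp1
        obtain ⟨-, hp2x, -⟩ := hmemS hp2
        exact notmem_span_pair (Ne.symm hp1x) (Ne.symm hp2x) hp3
    · intro y hyΓ hyx
      by_cases hyℓ : y.rep ∈ ℓ
      · exact ⟨_, List.mem_cons_self, Submodule.mem_sup_left hyℓ⟩
      by_cases hyy₀ : y = y₀
      · subst hyy₀
        exact ⟨_, List.mem_cons_self,
          Submodule.mem_sup_right (Submodule.mem_span_singleton_self _)⟩
      · have hyS : y ∈ S := by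
          rw [hSdef, hSfin.mem_toFinset]
          refine ⟨⟨hyΓ, hyℓ⟩, ?_⟩
          rintro (rfl | rfl)
          · exact hyx rfl
          · exact hyy₀ rfl
        obtain ⟨p, hpl, hyp⟩ := hlcov y hyS
        refine ⟨Submodule.span k {p.1.rep, p.2.rep},
          List.mem_cons_of_mem _ (List.mem_map.2 ⟨p, hpl, rfl⟩), ?_⟩
        rcases hyp with rfl | rfl
        exacts [rep_mem_span_pair_left _ _, rep_mem_span_pair_right _ _]
  -- coverB : Γ' on two genuinely skew lines is impossible when the A-side is small
  have coverB : ∀ A B : Submodule k (Fin (n+1) → k),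
      Module.finrank k A = 2 → Module.finrank k B = 2 →
      Module.finrank k ↥(A ⊔ B) = 4 → Γ' ⊆ projSet A ∪ projSet B →
      (Γ' ∩ projSet A).Nonempty → (Γ' ∩ projSet A).ncard ≤ r → False := by
    intro A B hArk hBrk hABrk hΓ'AB hAne hAle
    obtain ⟨x, hx⟩ := hAne
    obtain ⟨hxΓ', hxA⟩ := hx
    have hinf : A ⊓ B = ⊥ := by
      have h6 := Submodule.finrank_sup_add_finrank_inf_eq A B
      rw [hArk, hBrk, hABrk] at h6
      exact Submodule.finrank_eq_zero.1 (by omega)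
    have hxB : x.rep ∉ B := by
      intro h
      have h7 : x.rep ∈ A ⊓ B := ⟨hxA, h⟩
      rw [hinf] at h7
      exact x.rep_nonzero (by simpa using h7)
    have hxℓ : x.rep ∉ ℓ := hxΓ'.2
    set T := (Γ' ∩ projSet A) \ {x} with hTdef
    have hTfin : T.Finite := ((hΓ'fin.inter_of_left _)).diff
    have hTcard : T.ncard = (Γ' ∩ projSet A).ncard - 1 :=
      Set.ncard_diff_singleton_of_mem (s := Γ' ∩ projSet A) ⟨hxΓ', hxA⟩
    rcases Set.eq_empty_or_nonempty T with hTe | ⟨z₀, hz₀⟩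
    · apply cover_contradiction_list hCB hxΓ'.1 [ℓ, B] (by simp; omega)
      · intro w hw
        rcases List.mem_cons.1 hw with rfl | hw
        · exact hxℓ
        rcases List.mem_cons.1 hw with rfl | hw
        · exact hxB
        · simp at hw
      · intro y hyΓ hyx
        by_cases hyℓ : y.rep ∈ ℓ
        · exact ⟨ℓ, List.mem_cons_self, hyℓ⟩
        rcases hΓ'AB ⟨hyΓ, hyℓ⟩ with hyA | hyB
        · exfalso
          have : y ∈ T := ⟨⟨⟨hyΓ, hyℓ⟩, hyA⟩, hyx⟩
          rw [hTe] at this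
          exact this
        · exact ⟨B, List.mem_cons_of_mem _ (List.mem_cons_self), hyB⟩
    · have hz₀A : z₀.rep ∈ A := hz₀.1.2
      have hz₀Γ' : z₀ ∈ Γ' := hz₀.1.1
      have hz₀x : z₀ ≠ x := hz₀.2
      have hxz₀span : x.rep ∉ B ⊔ Submodule.span k {z₀.rep} := by
        intro hmem
        have hz₀' : z₀.rep ∈ B ⊔ Submodule.span k {x.rep} := exchange hmem hxB
        have hApair : Submodule.span k {x.rep, z₀.rep} = A := by
          apply Submodule.eq_of_le_of_finrank_le
          · rw [Submodule.span_le]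
            rintro v (rfl | rfl)
            exacts [hxA, hz₀A]
          · rw [finrank_span_pair (Ne.symm hz₀x), hArk]
        have hAle2 : A ≤ B ⊔ Submodule.span k {x.rep} := by
          rw [← hApair, Submodule.span_le]
          rintro v (rfl | rfl)
          · exact Submodule.mem_sup_right (Submodule.mem_span_singleton_self _)
          · exact hz₀'
        have hABle : A ⊔ B ≤ B ⊔ Submodule.span k {x.rep} := sup_le hAle2 le_sup_left
        have h4 := Submodule.finrank_mono hABle
        have h5 := finrank_sup_le B (Submodule.span k {x.rep})
        rw [finrank_span_singleton x.rep_nonzero] at h5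
        omega
      have hTz₀fin : (T \ {z₀}).Finite := hTfin.diff
      apply cover_contradiction_list hCB hxΓ'.1
        (ℓ :: (B ⊔ Submodule.span k {z₀.rep}) :: singles (T \ {z₀}) hTz₀fin)
      · simp only [List.length_cons, singles_length]
        have h8 : (T \ {z₀}).ncard = T.ncard - 1 :=
          Set.ncard_diff_singleton_of_mem hz₀
        have h9 : 1 ≤ T.ncard := (Set.ncard_pos hTfin).2 ⟨z₀, hz₀⟩
        omega
      · intro w hw
        rcases List.mem_cons.1 hw with rfl | hw
        · exact hxℓ
        rcases List.mem_cons.1 hw with rfl | hw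
        · exact hxz₀span
        · exact singles_notmem hTz₀fin (fun hmem => hmem.1.2 rfl) w hw
      · intro y hyΓ hyx
        by_cases hyℓ : y.rep ∈ ℓ
        · exact ⟨ℓ, List.mem_cons_self, hyℓ⟩
        rcases hΓ'AB ⟨hyΓ, hyℓ⟩ with hyA | hyB
        · by_cases hyz₀ : y = z₀
          · subst hyz₀
            exact ⟨_, List.mem_cons_of_mem _ (List.mem_cons_self),
              Submodule.mem_sup_right (Submodule.mem_span_singleton_self _)⟩
          · have hyT : y ∈ T \ {z₀} := ⟨⟨⟨⟨hyΓ, hyℓ⟩, hyA⟩, hyx⟩, hyz₀⟩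
            obtain ⟨w, hwl, hyw⟩ := singles_cover hTz₀fin hyT
            exact ⟨w, List.mem_cons_of_mem _ (List.mem_cons_of_mem _ hwl), hyw⟩
        · exact ⟨_, List.mem_cons_of_mem _ (List.mem_cons_self),
            Submodule.mem_sup_left hyB⟩
  -- split on t
  rcases Nat.lt_or_ge t 3 with ht2 | ht3
  · -- t = 2 : no three collinear points
    have hno3 : ∀ W : Submodule k (Fin (n+1) → k), Module.finrank k W ≤ 2 →
        (Γ ∩ projSet W).ncard ≤ 2 := fun W hW => le_trans (hℓmax W hW) (by omega)
    obtain ⟨a, b, c, haΓ, hbΓ, hcΓ, hab, hac, hbc⟩ := three_distinct hfin (by omega)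
    set TF : Finset (Submodule k (Fin (n+1) → k)) :=
      ((hfin.toFinset ×ˢ hfin.toFinset ×ˢ hfin.toFinset).filter
        (fun p => p.1 ≠ p.2.1 ∧ p.1 ≠ p.2.2 ∧ p.2.1 ≠ p.2.2)).image
        (fun p => Submodule.span k {p.1.rep, p.2.1.rep, p.2.2.rep}) with hTF
    have hmemTF : ∀ {u v w : ProjSpace k n}, u ∈ Γ → v ∈ Γ → w ∈ Γ →
        u ≠ v → u ≠ w → v ≠ w →
        Submodule.span k {u.rep, v.rep, w.rep} ∈ TF := by
      intro u v w hu hv hw h1 h2 h3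
      rw [hTF, Finset.mem_image]
      refine ⟨(u, v, w), Finset.mem_filter.2 ⟨?_, ⟨h1, h2, h3⟩⟩, rfl⟩
      rw [Finset.mem_product]
      refine ⟨hfin.mem_toFinset.2 hu, ?_⟩
      rw [Finset.mem_product]
      exact ⟨hfin.mem_toFinset.2 hv, hfin.mem_toFinset.2 hw⟩
    have hTFne : TF.Nonempty := ⟨_, hmemTF haΓ hbΓ hcΓ hab hac hbc⟩
    obtain ⟨P, hPTF, hPmax⟩ := TF.exists_max_image
      (fun W => (Γ ∩ projSet W).ncard) hTFne
    set s := (Γ ∩ projSet P).ncard with hs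
    have hPrk : Module.finrank k P ≤ 3 := by
      rw [hTF, Finset.mem_image] at hPTF
      obtain ⟨⟨u, v, w⟩, -, rfl⟩ := hPTF
      exact finrank_span_triple_le u v w
    have htriple : ∀ {u v w : ProjSpace k n}, u ∈ Γ → v ∈ Γ → w ∈ Γ →
        u ≠ v → u ≠ w → v ≠ w →
        3 ≤ (Γ ∩ projSet (Submodule.span k {u.rep, v.rep, w.rep})).ncard := by
      intro u v w hu hv hw h1 h2 h3
      have hsub : ({u, v, w} : Set (ProjSpace k n)) ⊆
          Γ ∩ projSet (Submodule.span k {u.rep, v.rep, w.rep}) := by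
        rintro z (rfl | rfl | rfl)
        · exact ⟨hu, Submodule.subset_span (by simp)⟩
        · exact ⟨hv, Submodule.subset_span (by simp)⟩
        · exact ⟨hw, Submodule.subset_span (by simp)⟩
      have h4 : ({u, v, w} : Set (ProjSpace k n)).ncard = 3 := by
        rw [Set.ncard_insert_of_notMem (by simp [h1, h2]) (Set.toFinite _),
          Set.ncard_pair h3]
      calc 3 = ({u, v, w} : Set (ProjSpace k n)).ncard := h4.symm
      _ ≤ _ := Set.ncard_le_ncard hsub (hfin.inter_of_left _)
    have hs3 : 3 ≤ s := le_trans (htriple haΓ hbΓ hcΓ hab hac hbc)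
      (hPmax _ (hmemTF haΓ hbΓ hcΓ hab hac hbc))
    have hplanebound : ∀ Q : Submodule k (Fin (n+1) → k), Module.finrank k Q ≤ 3 →
        3 ≤ (Γ ∩ projSet Q).ncard → (Γ ∩ projSet Q).ncard ≤ s := by
      intro Q hQrk hQ3
      obtain ⟨u, v, w, hu, hv, hw, huv, huw, hvw⟩ :=
        three_distinct (hfin.inter_of_left _) hQ3
      have hspan_le : Submodule.span k {u.rep, v.rep, w.rep} ≤ Q := by
        rw [Submodule.span_le]
        rintro z (rfl | rfl | rfl)
        exacts [hu.2, hv.2, hw.2]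
      have hfr3 : 3 ≤ Module.finrank k (Submodule.span k {u.rep, v.rep, w.rep}) := by
        by_contra hcon2
        push_neg at hcon2
        have h5 := hno3 (Submodule.span k {u.rep, v.rep, w.rep}) (by omega)
        have h6 := htriple hu.1 hv.1 hw.1 huv huw hvw
        omega
      have hQeq : Submodule.span k {u.rep, v.rep, w.rep} = Q :=
        Submodule.eq_of_le_of_finrank_le hspan_le (by omega)
      rw [← hQeq]
      exact hPmax _ (hmemTF hu.1 hv.1 hw.1 huv huw hvw)
    obtain ⟨hΔCB, hΔne, hΔge⟩ := key Γ (r-1) hfin hCB' P (hplane P hPrk)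
    set Δ := Γ \ projSet P with hΔdef
    have hΔfin : Δ.Finite := hfin.subset Set.diff_subset
    have hΔsplit : Γ.ncard = s + Δ.ncard := ncard_eq_diff_add hfin P
    have hΔnotline : ∀ W : Submodule k (Fin (n+1) → k), Module.finrank k W ≤ 2 →
        ¬ Δ ⊆ projSet W := by
      intro W hW hsub
      have h1 : Δ.ncard ≤ (Γ ∩ projSet W).ncard :=
        Set.ncard_le_ncard (fun z hz => ⟨hz.1, hsub hz⟩) (hfin.inter_of_left _)
      have h2 := hno3 W hW
      omega
    have hΔ2r : 2*r ≤ Δ.ncard := by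
      by_contra hlt
      push_neg at hlt
      obtain ⟨W, hWrk, hWsub⟩ := collinear_of_card_le (r-1) Δ hΔfin hΔCB (by omega)
      exact hΔnotline W hWrk hWsub
    have hIH := IH (r-1) (by omega) (by omega) Δ hΔfin hΔCB (by omega)
    rcases hIH with ⟨P'', hP''rk, hP''⟩ | ⟨M₁, M₂, hM₁, hM₂, hMM⟩
    · have h1 : Δ.ncard ≤ (Γ ∩ projSet P'').ncard :=
        Set.ncard_le_ncard (fun z hz => ⟨hz.1, hP'' hz⟩) (hfin.inter_of_left _)
      have h2 := hplanebound P'' hP''rk (by omega)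
      omega
    · have h1 : Δ.ncard ≤ 4 := by
        have hsub : Δ ⊆ (Γ ∩ projSet M₁) ∪ (Γ ∩ projSet M₂) := by
          intro z hz
          rcases hMM hz with h | h
          exacts [Or.inl ⟨hz.1, h⟩, Or.inr ⟨hz.1, h⟩]
        have h2 := Set.ncard_union_le (Γ ∩ projSet M₁) (Γ ∩ projSet M₂)
        have h3 := Set.ncard_le_ncard hsub
          ((hfin.inter_of_left _).union (hfin.inter_of_left _))
        have h4 := hno3 M₁ hM₁
        have h5 := hno3 M₂ hM₂
        omega
      have hreq : r = 2 := by omega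
      obtain ⟨x₀, hx₀⟩ := hΔne
      set W₃ := Submodule.span k ((fun y : ProjSpace k n => y.rep) '' (Δ \ {x₀})) with hW₃
      have hx₀W₃ : x₀.rep ∈ W₃ := rep_mem_span_others (by omega) hΔCB hx₀
      have hΔW₃ : Δ ⊆ projSet W₃ := by
        intro y hy
        by_cases h : y = x₀
        · subst h; exact hx₀W₃
        · exact Submodule.subset_span ⟨y, ⟨hy, h⟩, rfl⟩
      have hW₃rk : Module.finrank k W₃ ≤ 3 := by
        have h6 : Module.finrank k W₃ ≤ (Δ \ {x₀}).ncard :=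
          finrank_span_reps_le (S := Δ \ {x₀}) (hΔfin.subset Set.diff_subset)
        have h7 : (Δ \ {x₀}).ncard = Δ.ncard - 1 :=
          Set.ncard_diff_singleton_of_mem hx₀
        omega
      have h8 : Δ.ncard ≤ (Γ ∩ projSet W₃).ncard :=
        Set.ncard_le_ncard (fun z hz => ⟨hz.1, hΔW₃ hz⟩) (hfin.inter_of_left _)
      have h9 := hplanebound W₃ hW₃rk (by omega)
      omega
  · -- t ≥ 3
    have hIH := IH (r-1) (by omega) (by omega) Γ' hΓ'fin hΓ'CB (by omega)
    rcases hIH with ⟨P, hPrk, hP⟩ | ⟨L₁, L₂, h1rk, h2rk, hLL⟩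
    · exact caseA P hPrk hP
    · by_cases hsup : Module.finrank k ↥(L₁ ⊔ L₂) ≤ 3
      · apply caseA (L₁ ⊔ L₂) hsup
        intro y hy
        rcases hLL hy with h | h
        · exact Submodule.mem_sup_left h
        · exact Submodule.mem_sup_right h
      · have hsle := finrank_sup_le L₁ L₂
        have h4 : Module.finrank k ↥(L₁ ⊔ L₂) = 4 := by omega
        have h1rk' : Module.finrank k L₁ = 2 := by omega
        have h2rk' : Module.finrank k L₂ = 2 := by omega
        have hinf : L₁ ⊓ L₂ = ⊥ := by
          have h6 := Submodule.finrank_sup_add_finrank_inf_eq L₁ L₂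
          rw [h1rk', h2rk', h4] at h6
          exact Submodule.finrank_eq_zero.1 (by omega)
        have hdisj : Disjoint (Γ' ∩ projSet L₁) (Γ' ∩ projSet L₂) := by
          rw [Set.disjoint_left]
          rintro z ⟨-, hz1⟩ ⟨-, hz2⟩
          have h7 : z.rep ∈ L₁ ⊓ L₂ := ⟨hz1, hz2⟩
          rw [hinf] at h7
          exact z.rep_nonzero (by simpa using h7)
        have hsum : (Γ' ∩ projSet L₁).ncard + (Γ' ∩ projSet L₂).ncard = Γ'.ncard := by
          rw [← Set.ncard_union_eq hdisj (hΓ'fin.inter_of_left _) (hΓ'fin.inter_of_left _)]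
          congr 1
          ext z
          constructor
          · rintro (hz | hz)
            exacts [hz.1, hz.1]
          · intro hz
            rcases hLL hz with h | h
            exacts [Or.inl ⟨hz, h⟩, Or.inr ⟨hz, h⟩]
        have hs₁t : (Γ ∩ projSet L₁).ncard ≤ t := hℓmax L₁ (le_of_eq h1rk')
        have hs₂t : (Γ ∩ projSet L₂).ncard ≤ t := hℓmax L₂ (le_of_eq h2rk')
        have hs₁le : (Γ' ∩ projSet L₁).ncard ≤ (Γ ∩ projSet L₁).ncard :=
          Set.ncard_le_ncard (Set.inter_subset_inter_left _ Set.diff_subset)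
            (hfin.inter_of_left _)
        have hs₂le : (Γ' ∩ projSet L₂).ncard ≤ (Γ ∩ projSet L₂).ncard :=
          Set.ncard_le_ncard (Set.inter_subset_inter_left _ Set.diff_subset)
            (hfin.inter_of_left _)
        by_cases hcase : (Γ' ∩ projSet L₁).ncard ≤ r
        · apply coverB L₁ L₂ h1rk' h2rk' h4 hLL ?_ hcase
          rw [← Set.ncard_pos (hΓ'fin.inter_of_left _)]
          omega
        · apply coverB L₂ L₁ h2rk' h1rk' (by rwa [sup_comm]) ?_ ?_ ?_
          · intro y hy
            rcases hLL hy with h | h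
            exacts [Or.inr h, Or.inl h]
          · rw [← Set.ncard_pos (hΓ'fin.inter_of_left _)]
            omega
          · omega

end CB


/-- Case `d = 2`: a finite set satisfying `CB(r)` with at most `3r + 1` points lies on a
projective linear subspace of dimension at most `2`, or on two disjoint lines. -/
theorem case_d_eq_two {k : Type*} [Field k] [Infinite k] {n : ℕ} (r : ℕ) (hr : 1 ≤ r)
    (Γ : Set (ProjSpace k n)) (hfin : Γ.Finite) (hCB : IsCB r Γ)
    (hcard : Γ.ncard ≤ 3 * r + 1) :
    (∃ W : Submodule k (Fin (n + 1) → k),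
      Module.finrank k W ≤ 3 ∧ Γ ⊆ projSet W) ∨
    (∃ L₁ L₂ : Submodule k (Fin (n + 1) → k),
      Module.finrank k L₁ = 2 ∧ Module.finrank k L₂ = 2 ∧ L₁ ⊓ L₂ = ⊥ ∧
      Γ ⊆ projSet L₁ ∪ projSet L₂) := by
  rcases CB.main r hr Γ hfin hCB hcard with ⟨W, hW, hsub⟩ | ⟨L₁, L₂, h1, h2, hsub⟩
  · exact Or.inl ⟨W, hW, hsub⟩
  · by_cases hsup : Module.finrank k ↥(L₁ ⊔ L₂) ≤ 3
    · refine Or.inl ⟨L₁ ⊔ L₂, hsup, ?_⟩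
      intro y hy
      rcases hsub hy with h | h
      · exact Submodule.mem_sup_left h
      · exact Submodule.mem_sup_right h
    · have hle := CB.finrank_sup_le L₁ L₂
      have h4 : Module.finrank k ↥(L₁ ⊔ L₂) = 4 := by omega
      have e1 : Module.finrank k L₁ = 2 := by omega
      have e2 : Module.finrank k L₂ = 2 := by omega
      have hinf : L₁ ⊓ L₂ = ⊥ := by
        have h6 := Submodule.finrank_sup_add_finrank_inf_eq L₁ L₂
        rw [e1, e2, h4] at h6
        exact Submodule.finrank_eq_zero.1 (by omega)
      exact Or.inr ⟨L₁, L₂, e1, e2, hinf, hsub⟩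
end

section
/- Sharpness of the bound: For every d ≥ 1 and every r ≥ 2, there exists a finite set Γ ⊆ ℙ^{d+1} with |Γ| = (d+1)r + 2 that satisfies CB(r) but does not lie on any plane configuration of dimension at most d. (Such a set is given by any (d+1)r + 2 distinct points on a rational normal curve of degree d + 1 in ℙ^{d+1}, e.g., points of the form [1 : t : t² : … : t^{d+1}] for distinct t ∈ k.) -/
open MvPolynomial

/-! ### Auxiliary material: the moment curve in `ℙ^(d+1)` -/

/-- The moment-curve vector `(1, t, t², …, t^(d+1))`. -/
noncomputable def mom {k : Type*} [Field k] (d : ℕ) (t : k) : Fin (d + 2) → k :=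
  fun i => t ^ (i : ℕ)

lemma mom_ne_zero {k : Type*} [Field k] (d : ℕ) (t : k) : mom d t ≠ 0 := by
  intro h
  have h0 : mom d t 0 = 0 := by rw [h]; rfl
  simp [mom] at h0

lemma homog_eval_smul {k : Type*} [Field k] {n r : ℕ} {F : MvPolynomial (Fin n) k}
    (hF : F.IsHomogeneous r) (a : k) (x : Fin n → k) :
    eval (a • x) F = a ^ r * eval x F := by
  rw [eval_eq, eval_eq, Finset.mul_sum]
  apply Finset.sum_congr rfl
  intro m hm
  have hdeg : ∑ i ∈ m.support, m i = r := by
    have := hF (mem_support_iff.mp hm)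
    simpa [Finsupp.weight_apply, Finsupp.sum] using this
  simp only [Pi.smul_apply, smul_eq_mul, mul_pow, Finset.prod_mul_distrib,
    Finset.prod_pow_eq_pow_sum]
  rw [hdeg]; ring

/-- The restriction of a multivariate polynomial to the moment curve. -/
noncomputable def momPoly {k : Type*} [Field k] (d : ℕ) (F : MvPolynomial (Fin (d + 2)) k) :
    Polynomial k :=
  aeval (fun i : Fin (d + 2) => (Polynomial.X : Polynomial k) ^ (i : ℕ)) F

lemma momPoly_eval {k : Type*} [Field k] (d : ℕ) (F : MvPolynomial (Fin (d + 2)) k) (t : k) :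
    (momPoly d F).eval t = eval (mom d t) F := by
  have h : (momPoly d F).eval t =
      (Polynomial.evalRingHom t) (eval₂ Polynomial.C
        (fun i : Fin (d + 2) => (Polynomial.X : Polynomial k) ^ (i : ℕ)) F) := by
    rw [momPoly, aeval_def]; rfl
  rw [h, eval₂_comp_left]
  simp [eval, eval₂_eq, mom]

lemma momPoly_natDegree_le {k : Type*} [Field k] {d r : ℕ} {F : MvPolynomial (Fin (d + 2)) k}
    (hF : F.IsHomogeneous r) : (momPoly d F).natDegree ≤ (d + 1) * r := by
  rw [momPoly]
  conv_lhs => rw [F.as_sum]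
  rw [map_sum]
  apply Polynomial.natDegree_sum_le_of_forall_le
  intro m hm
  rw [aeval_monomial]
  apply le_trans (Polynomial.natDegree_mul_le)
  have h1 : (algebraMap k (Polynomial k)) (coeff m F) = Polynomial.C (coeff m F) := rfl
  rw [h1, Polynomial.natDegree_C]
  simp only [zero_add]
  have h2 : (m.prod fun i e => ((Polynomial.X : Polynomial k) ^ (i : ℕ)) ^ e) =
      Polynomial.X ^ (∑ i ∈ m.support, (i : ℕ) * m i) := by
    rw [Finsupp.prod]
    simp_rw [← pow_mul]
    rw [Finset.prod_pow_eq_pow_sum]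
  rw [h2, Polynomial.natDegree_X_pow]
  have hdeg : ∑ i ∈ m.support, m i = r := by
    have := hF (mem_support_iff.mp hm)
    simpa [Finsupp.weight_apply, Finsupp.sum] using this
  calc ∑ i ∈ m.support, (i : ℕ) * m i ≤ ∑ i ∈ m.support, (d + 1) * m i := by
        apply Finset.sum_le_sum
        intro i _
        exact Nat.mul_le_mul_right _ (Nat.lt_succ_iff.mp i.isLt)
    _ = (d + 1) * r := by rw [← Finset.mul_sum, hdeg]

lemma mom_li {k : Type*} [Field k] [Infinite k] (d : ℕ) (S : Finset k) (hS : S.card ≤ d + 2) :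
    LinearIndependent k (fun t : S => mom d (t : k)) := by
  obtain ⟨S', hsub, hcard⟩ := Infinite.exists_superset_card_eq S (d + 2) hS
  have e : {x // x ∈ S'} ≃ Fin (d + 2) := S'.equivFinOfCardEq hcard
  set v : Fin (d + 2) → k := fun j => (e.symm j : k) with hv
  have hvinj : Function.Injective v := fun i j h =>
    e.symm.injective (Subtype.coe_injective h)
  have hdet : IsUnit (Matrix.vandermonde v) := by
    rw [Matrix.isUnit_iff_isUnit_det, isUnit_iff_ne_zero, Matrix.det_vandermonde_ne_zero_iff]
    exact hvinj
  have hLI : LinearIndependent k (fun i : Fin (d + 2) => mom d (v i)) := by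
    have := Matrix.linearIndependent_rows_iff_isUnit.mpr hdet
    convert this using 1
    rfl
  have hinj2 : Function.Injective (fun t : S => e ⟨(t : k), hsub t.2⟩) := by
    intro a b h
    have := e.injective h
    exact Subtype.ext (congrArg Subtype.val this :)
  have hcomp := hLI.comp _ hinj2
  have heq : (fun t : S => mom d (t : k)) =
      (fun i => mom d (v i)) ∘ (fun t : S => e ⟨(t : k), hsub t.2⟩) := by
    funext t
    simp [hv]
  rw [heq]
  exact hcomp

/-- Sharpness of the bound: for every `d ≥ 1` and `r ≥ 2` there is a finite set of
exactly `(d+1)r + 2` points in `ℙ^(d+1)` satisfying `CB(r)` which does not lie on any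
plane configuration of dimension at most `d`. -/
theorem sharpness {k : Type*} [Field k] [Infinite k] (d r : ℕ) (hd : 1 ≤ d) (hr : 2 ≤ r) :
    ∃ Γ : Set (ProjSpace k (d + 1)), Γ.Finite ∧ Γ.ncard = (d + 1) * r + 2 ∧
      IsCB r Γ ∧ ¬ ∃ C : PlaneConfig k (d + 1), C.dim ≤ d ∧ Γ ⊆ C.points := by
  classical
  set N := (d + 1) * r + 2 with hN
  obtain ⟨T, -, hTcard⟩ := Infinite.exists_superset_card_eq (∅ : Finset k) N (by simp)
  set φ : k → ProjSpace k (d + 1) :=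
    fun t => Projectivization.mk k (mom d t) (mom_ne_zero d t) with hφ
  have hφinj : Function.Injective φ := by
    intro s t h
    rw [hφ] at h
    simp only at h
    rw [Projectivization.mk_eq_mk_iff] at h
    obtain ⟨a, ha⟩ := h
    have h0 := congrFun ha 0
    have h1 := congrFun ha 1
    simp [mom, Units.smul_def] at h0 h1
    simp [h0] at h1
    exact h1.symm
  have hrep : ∀ t : k, ∃ a : kˣ, (a : kˣ) • mom d t = (φ t).rep :=
    fun t => Projectivization.exists_smul_eq_mk_rep k (mom d t) (mom_ne_zero d t)
  have hev : ∀ (F : MvPolynomial (Fin (d + 2)) k), F.IsHomogeneous r → ∀ t : k,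
      (eval (φ t).rep F = 0 ↔ eval (mom d t) F = 0) := by
    intro F hF t
    obtain ⟨a, ha⟩ := hrep t
    have hne : ((a : k)) ^ r ≠ 0 := pow_ne_zero r a.ne_zero
    rw [← ha, Units.smul_def, homog_eval_smul hF]
    simp [hne]
  refine ⟨φ '' ↑T, T.finite_toSet.image φ, ?_, ?_, ?_⟩
  · rw [Set.ncard_image_of_injective _ hφinj, Set.ncard_coe_finset, hTcard]
  · intro F hF x hx hvan
    obtain ⟨t, ht, rfl⟩ := hx
    rw [hev F hF t, ← momPoly_eval]
    have hq : momPoly d F = 0 := by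
      apply Polynomial.eq_zero_of_natDegree_lt_card_of_eval_eq_zero' _ (T.erase t)
      · intro s hs
        obtain ⟨hst, hsT⟩ := Finset.mem_erase.mp hs
        rw [momPoly_eval]
        rw [← hev F hF s]
        exact hvan (φ s) ⟨s, hsT, rfl⟩ (fun h => hst (hφinj h))
      · rw [Finset.card_erase_of_mem (Finset.mem_coe.mp ht), hTcard]
        exact lt_of_le_of_lt (momPoly_natDegree_le hF) (by omega)
    rw [hq, Polynomial.eval_zero]
  · rintro ⟨C, hdim, hsubΓ⟩
    have hplane : ∀ t : T, ∃ i, mom d (t : k) ∈ C.P i := by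
      intro t
      have hx : φ (t : k) ∈ C.points := hsubΓ ⟨(t : k), t.2, rfl⟩
      obtain ⟨i, hmem⟩ := Set.mem_iUnion.mp hx
      refine ⟨i, ?_⟩
      obtain ⟨a, ha⟩ := hrep (t : k)
      have hmom : mom d (t : k) = (a : k)⁻¹ • (φ (t : k)).rep := by
        rw [← ha, Units.smul_def, smul_smul, inv_mul_cancel₀ a.ne_zero, one_smul]
      rw [hmom]
      exact Submodule.smul_mem _ _ hmem
    choose f hf using hplane
    have hfiber : ∀ i, (Finset.univ.filter (fun t : T => f t = i)).card ≤
        Module.finrank k (C.P i) := by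
      intro i
      by_contra hcon
      push_neg at hcon
      set m := Module.finrank k (C.P i) with hm
      obtain ⟨S₀, hS₀sub, hS₀card⟩ := Finset.exists_subset_card_eq (Nat.succ_le_of_lt hcon)
      set S₁ : Finset k := S₀.image (fun t : {x // x ∈ T} => (t : k)) with hS₁
      have hS₁card : S₁.card = m + 1 := by
        rw [hS₁, Finset.card_image_of_injective _ Subtype.coe_injective, hS₀card]
      have hm_le : m ≤ d + 1 := by
        have h1 : m - 1 ≤ C.dim :=
          Finset.single_le_sum (f := fun j => Module.finrank k (C.P j) - 1)
            (fun _ _ => Nat.zero_le _) (Finset.mem_univ i)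
        have h2 := C.posdim i
        omega
      have hLI := mom_li d S₁ (by omega)
      have hmem : ∀ u : S₁, mom d (u : k) ∈ C.P i := by
        intro u
        obtain ⟨t, htS₀, hteq⟩ := Finset.mem_image.mp u.2
        have hft : f t = i := (Finset.mem_filter.mp (hS₀sub htS₀)).2
        rw [← hteq, ← hft]
        exact hf t
      have hLI' : LinearIndependent k (fun u : S₁ => (⟨mom d (u : k), hmem u⟩ : C.P i)) := by
        apply LinearIndependent.of_comp (C.P i).subtype
        exact hLI
      have hcard := hLI'.fintype_card_le_finrank
      rw [Fintype.card_coe, hS₁card] at hcard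
      omega
    have hsum : (Finset.univ : Finset T).card =
        ∑ i, (Finset.univ.filter (fun t : T => f t = i)).card :=
      Finset.card_eq_sum_card_fiberwise (fun t _ => Finset.mem_univ (f t))
    have hTN : (Finset.univ : Finset T).card = N := by
      rw [Finset.card_univ, Fintype.card_coe, hTcard]
    have hlen : C.length ≤ C.dim := by
      have h1 : ∑ _i : Fin C.length, 1 ≤ ∑ i, (Module.finrank k (C.P i) - 1) :=
        Finset.sum_le_sum (fun i _ => by have := C.posdim i; omega)
      simpa [PlaneConfig.dim] using h1
    have hfin : (∑ i, Module.finrank k (C.P i)) = C.dim + C.length := by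
      calc ∑ i, Module.finrank k (C.P i)
          = ∑ i, ((Module.finrank k (C.P i) - 1) + 1) :=
            Finset.sum_congr rfl (fun i _ => by have := C.posdim i; omega)
        _ = C.dim + C.length := by
            rw [Finset.sum_add_distrib]
            simp [PlaneConfig.dim]
    have hNle : N ≤ C.dim + C.length := by
      rw [← hfin, ← hTN, hsum]
      exact Finset.sum_le_sum (fun i _ => hfiber i)
    have hNge : 2 * (d + 1) + 2 ≤ N := by
      have := Nat.mul_le_mul_left (d + 1) hr
      omega
    omega
end
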